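/- arXiv:1110.1243 — 5 statements merged into one kernel-verified Lean document; each statement's English description precedes it below -/
import Mathlib

section
/- Let X be a Banach space, (x_k) a weakly Cauchy sequence in X, and c > 0 such that ca(x_k) > c. Then there exists a subsequence (x_{k_n}) of (x_k) such that wca(x_{k_n}) ≥ c/2, i.e., every further subsequence (y_l) of (x_{k_n}) satisfies ca(y_l) ≥ c/2. -/
open Metric NormedSpace Filter Topology Set

noncomputable section

/-- A subset of a Banach space is weakly compact if it is compact in the weak topology. -/
def IsWeaklyCompact {Z : Type*} [NormedAddCommGroup Z] [NormedSpace ℝ Z] (K : Set Z) : Prop :=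
  IsCompact (toWeakSpace ℝ Z '' K)

/-- `ca (x_k) = inf_n sup_{i,j ≥ n} ‖x_i - x_j‖`. -/
def ca {Z : Type*} [NormedAddCommGroup Z] (x : ℕ → Z) : ℝ :=
  ⨅ n : ℕ, sSup {r : ℝ | ∃ i j : ℕ, n ≤ i ∧ n ≤ j ∧ r = ‖x i - x j‖}

/-- `wca` is the infimum of `ca` over all subsequences. -/
def wca {Z : Type*} [NormedAddCommGroup Z] (x : ℕ → Z) : ℝ :=
  ⨅ φ : {φ : ℕ → ℕ // StrictMono φ}, ca (x ∘ φ)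

/-- A sequence is weakly Cauchy if `(x*(x_k))` converges for every functional `x*`. -/
def WeaklyCauchy {Z : Type*} [NormedAddCommGroup Z] [NormedSpace ℝ Z] (x : ℕ → Z) : Prop :=
  ∀ f : StrongDual ℝ Z, ∃ l : ℝ, Tendsto (fun n => f (x n)) atTop (nhds l)

/-- A sequence is weakly null if `x*(x_k) → 0` for every functional `x*`. -/
def WeaklyNull {Z : Type*} [NormedAddCommGroup Z] [NormedSpace ℝ Z] (x : ℕ → Z) : Prop :=
  ∀ f : StrongDual ℝ Z, Tendsto (fun n => f (x n)) atTop (nhds 0)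

/-- `cc T`: measure of non-complete-continuity of an operator. -/
def cc {X Y : Type*} [NormedAddCommGroup X] [NormedSpace ℝ X]
    [NormedAddCommGroup Y] [NormedSpace ℝ Y] (T : X →L[ℝ] Y) : ℝ :=
  sSup {r : ℝ | ∃ x : ℕ → X, (∀ n, ‖x n‖ ≤ 1) ∧ WeaklyCauchy x ∧
    r = ca (fun n => T (x n))}

/-- Non-symmetrized Hausdorff distance `d̂(A,B) = sup_{a ∈ A} dist(a, B)`. -/
def dhat {Z : Type*} [NormedAddCommGroup Z] (A B : Set Z) : ℝ :=
  ⨆ a : A, infDist (a : Z) B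

/-- de Blasi measure of weak non-compactness. -/
def deBlasiOmega {Z : Type*} [NormedAddCommGroup Z] [NormedSpace ℝ Z] (A : Set Z) : ℝ :=
  ⨅ K : {K : Set Z // K.Nonempty ∧ IsWeaklyCompact K}, dhat A K

/-- Hausdorff measure of non-compactness. -/
def hausdorffChi {Z : Type*} [NormedAddCommGroup Z] (A : Set Z) : ℝ :=
  ⨅ F : {F : Set Z // F.Finite ∧ F.Nonempty}, dhat A F

/-- weak* closure of a set of functionals. -/
def wstarClosure {E : Type*} [NormedAddCommGroup E] [NormedSpace ℝ E]
    (A : Set (StrongDual ℝ E)) : Set (StrongDual ℝ E) :=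
  StrongDual.toWeakDual ⁻¹' closure (StrongDual.toWeakDual '' A)

/-- `wk_Z(A) = d̂(cl_{w*}(ι(A)), ι(Z))` in the bidual. -/
def wkMeasure {Z : Type*} [NormedAddCommGroup Z] [NormedSpace ℝ Z] (A : Set Z) : ℝ :=
  dhat (wstarClosure ((inclusionInDoubleDual ℝ Z) '' A))
    (Set.range (inclusionInDoubleDual ℝ Z))

/-- `z` is a weak* cluster point of the sequence `u` of functionals. -/
def IsWeakStarClusterPt {E : Type*} [NormedAddCommGroup E] [NormedSpace ℝ E]
    (z : StrongDual ℝ E) (u : ℕ → StrongDual ℝ E) : Prop :=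
  MapClusterPt (StrongDual.toWeakDual z) atTop (fun n => StrongDual.toWeakDual (u n))

/-- `wck(A)`. -/
def wck {Z : Type*} [NormedAddCommGroup Z] [NormedSpace ℝ Z] (A : Set Z) : ℝ :=
  sSup {r : ℝ | ∃ x : ℕ → Z, (∀ n, x n ∈ A) ∧
    r = sInf {s : ℝ | ∃ (z : StrongDual ℝ (StrongDual ℝ Z)) (x₀ : Z),
      IsWeakStarClusterPt z (fun n => inclusionInDoubleDual ℝ Z (x n)) ∧
      s = ‖z - inclusionInDoubleDual ℝ Z x₀‖}}

/-- `ca_ρ` of a sequence. -/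
def caRho {Z : Type*} [NormedAddCommGroup Z] [NormedSpace ℝ Z] (x : ℕ → Z) : ℝ :=
  ⨆ K : {K : Set (StrongDual ℝ Z) // K ⊆ closedBall 0 1 ∧ IsWeaklyCompact K},
    ⨅ n : ℕ, sSup {r : ℝ | ∃ i j : ℕ, n ≤ i ∧ n ≤ j ∧
      ∃ f ∈ K.1, r = |f (x i) - f (x j)|}

/-- `wca_ρ` of a sequence. -/
def wcaRho {Z : Type*} [NormedAddCommGroup Z] [NormedSpace ℝ Z] (x : ℕ → Z) : ℝ :=
  ⨅ φ : {φ : ℕ → ℕ // StrictMono φ}, caRho (x ∘ φ)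

/-- `ca_{ρ*}` of a sequence in a dual space. -/
def caRhoStar {Z : Type*} [NormedAddCommGroup Z] [NormedSpace ℝ Z]
    (x : ℕ → StrongDual ℝ Z) : ℝ :=
  ⨆ K : {K : Set Z // K ⊆ closedBall 0 1 ∧ IsWeaklyCompact K},
    ⨅ n : ℕ, sSup {r : ℝ | ∃ i j : ℕ, n ≤ i ∧ n ≤ j ∧
      ∃ v ∈ K.1, r = |x i v - x j v|}

/-- `wca_{ρ*}` of a sequence in a dual space. -/
def wcaRhoStar {Z : Type*} [NormedAddCommGroup Z] [NormedSpace ℝ Z]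
    (x : ℕ → StrongDual ℝ Z) : ℝ :=
  ⨅ φ : {φ : ℕ → ℕ // StrictMono φ}, caRhoStar (x ∘ φ)

/-- `δ(x_k)`. -/
def deltaSeq {Z : Type*} [NormedAddCommGroup Z] [NormedSpace ℝ Z] (x : ℕ → Z) : ℝ :=
  ⨆ f : (closedBall (0 : StrongDual ℝ Z) 1),
    ⨅ n : ℕ, sSup {r : ℝ | ∃ i j : ℕ, n ≤ i ∧ n ≤ j ∧
      r = |(f : StrongDual ℝ Z) (x i) - (f : StrongDual ℝ Z) (x j)|}

/-- The adjoint of a bounded operator between Banach spaces. -/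
def adjointOp {X Y : Type*} [NormedAddCommGroup X] [NormedSpace ℝ X]
    [NormedAddCommGroup Y] [NormedSpace ℝ Y] (T : X →L[ℝ] Y) :
    StrongDual ℝ Y →L[ℝ] StrongDual ℝ X :=
  (ContinuousLinearMap.compL ℝ X Y ℝ).flip T

private lemma exists_wstar_limit {X : Type*} [NormedAddCommGroup X] [NormedSpace ℝ X]
    (x : ℕ → X) (hx : WeaklyCauchy x) (M : ℝ) (hM : ∀ k, ‖x k‖ ≤ M) :
    ∃ z : StrongDual ℝ (StrongDual ℝ X), ∀ f : StrongDual ℝ X, Tendsto (fun n => f (x n)) atTop (𝓝 (z f)) := by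
  choose l hl using hx
  refine ⟨LinearMap.mkContinuous
    { toFun := l
      map_add' := fun f g => tendsto_nhds_unique (by simpa using hl (f + g)) ((hl f).add (hl g))
      map_smul' := fun a f => by
        simpa using tendsto_nhds_unique (by simpa using hl (a • f)) ((hl f).const_mul a) }
    M (fun f => ?_), fun f => hl f⟩
  refine le_of_tendsto (hl f).norm (Filter.Eventually.of_forall fun k => ?_)
  calc ‖f (x k)‖ ≤ ‖f‖ * ‖x k‖ := f.le_opNorm _
    _ ≤ ‖f‖ * M := mul_le_mul_of_nonneg_left (hM k) (norm_nonneg f)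
    _ = M * ‖f‖ := mul_comm _ _

/-- If `(x_k)` is a weakly Cauchy sequence in a Banach space `X` and
`ca(x_k) > c > 0`, then there is a subsequence `(x_{k_n})` with `wca(x_{k_n}) ≥ c/2`,
i.e. every further subsequence `(y_l)` satisfies `ca(y_l) ≥ c/2`. -/
theorem statement0 {X : Type*} [NormedAddCommGroup X] [NormedSpace ℝ X] [CompleteSpace X]
    (x : ℕ → X) (hx : WeaklyCauchy x) (c : ℝ) (hc : 0 < c) (hca : c < ca x) :
    ∃ φ : ℕ → ℕ, StrictMono φ ∧ c / 2 ≤ wca (x ∘ φ) ∧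
      ∀ ψ : ℕ → ℕ, StrictMono ψ → c / 2 ≤ ca ((x ∘ φ) ∘ ψ) := by
  classical
  -- uniform bound on the sequence, by Banach–Steinhaus in the bidual
  obtain ⟨M, hM⟩ : ∃ M : ℝ, ∀ k, ‖x k‖ ≤ M := by
    obtain ⟨C, hC⟩ := banach_steinhaus (g := fun k => inclusionInDoubleDual ℝ X (x k))
      (fun f => by
        obtain ⟨l, hl⟩ := hx f
        obtain ⟨C, hC⟩ := hl.norm.bddAbove_range
        exact ⟨C, fun k => hC ⟨k, rfl⟩⟩)
    refine ⟨C, fun k => ?_⟩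
    calc ‖x k‖ = ‖inclusionInDoubleDual ℝ X (x k)‖ :=
          ((inclusionInDoubleDualLi ℝ (E := X)).norm_map (x k)).symm
      _ ≤ C := hC k
  obtain ⟨z, hz⟩ := exists_wstar_limit x hx M hM
  -- a triangle inequality through the bidual limit z
  have hsep : ∀ i j : ℕ, ‖x i - x j‖ ≤
      ‖inclusionInDoubleDual ℝ X (x i) - z‖ + ‖inclusionInDoubleDual ℝ X (x j) - z‖ := by
    intro i j
    have h1 : ‖x i - x j‖ =
        ‖inclusionInDoubleDual ℝ X (x i) - inclusionInDoubleDual ℝ X (x j)‖ := by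
      rw [← map_sub]
      exact ((inclusionInDoubleDualLi ℝ (E := X)).norm_map _).symm
    rw [h1]
    calc ‖inclusionInDoubleDual ℝ X (x i) - inclusionInDoubleDual ℝ X (x j)‖
        ≤ ‖inclusionInDoubleDual ℝ X (x i) - z‖ + ‖z - inclusionInDoubleDual ℝ X (x j)‖ :=
          norm_sub_le_norm_sub_add_norm_sub (inclusionInDoubleDual ℝ X (x i)) z (inclusionInDoubleDual ℝ X (x j))
      _ = ‖inclusionInDoubleDual ℝ X (x i) - z‖ + ‖inclusionInDoubleDual ℝ X (x j) - z‖ := by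
          rw [norm_sub_rev z]
  -- all the sup sets are bounded above
  have hBdd : ∀ (y : ℕ → X), (∀ m, ∃ k, y m = x k) → ∀ n : ℕ,
      BddAbove {r : ℝ | ∃ i j : ℕ, n ≤ i ∧ n ≤ j ∧ r = ‖y i - y j‖} := by
    intro y hy n
    refine ⟨M + M, ?_⟩
    rintro r ⟨i, j, -, -, rfl⟩
    obtain ⟨ki, hki⟩ := hy i
    obtain ⟨kj, hkj⟩ := hy j
    calc ‖y i - y j‖ ≤ ‖y i‖ + ‖y j‖ := norm_sub_le _ _
      _ ≤ M + M := by rw [hki, hkj]; exact add_le_add (hM _) (hM _)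
  have h0mem : ∀ n, (0 : ℝ) ∈ {r : ℝ | ∃ i j : ℕ, n ≤ i ∧ n ≤ j ∧ r = ‖x i - x j‖} :=
    fun n => ⟨n, n, le_refl n, le_refl n, by simp⟩
  -- key: frequently the sequence is far from z in the bidual
  have hkey : ∀ n : ℕ, ∃ m, n ≤ m ∧ c / 2 < ‖inclusionInDoubleDual ℝ X (x m) - z‖ := by
    intro n
    have hbelow : BddBelow (Set.range fun n =>
        sSup {r : ℝ | ∃ i j : ℕ, n ≤ i ∧ n ≤ j ∧ r = ‖x i - x j‖}) := by
      refine ⟨0, ?_⟩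
      rintro _ ⟨n, rfl⟩
      exact le_csSup (hBdd x (fun m => ⟨m, rfl⟩) n) (h0mem n)
    have h1 : c < sSup {r : ℝ | ∃ i j : ℕ, n ≤ i ∧ n ≤ j ∧ r = ‖x i - x j‖} := by
      unfold ca at hca
      exact lt_of_lt_of_le hca (ciInf_le hbelow n)
    obtain ⟨r, ⟨i, j, hi, hj, rfl⟩, hr⟩ := exists_lt_of_lt_csSup ⟨0, h0mem n⟩ h1
    have htri := hsep i j
    by_cases hcase : c / 2 < ‖inclusionInDoubleDual ℝ X (x i) - z‖
    · exact ⟨i, hi, hcase⟩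
    · push_neg at hcase
      exact ⟨j, hj, by linarith⟩
  obtain ⟨φ, hφ, hφP⟩ := Filter.extraction_of_frequently_atTop
    (Filter.frequently_atTop.2 hkey)
  -- main estimate on every further subsequence
  have hmain : ∀ ψ : ℕ → ℕ, StrictMono ψ → c / 2 ≤ ca (x ∘ φ ∘ ψ) := by
    intro ψ hψ
    unfold ca
    refine le_ciInf fun n => ?_
    set y : ℕ → X := x ∘ φ ∘ ψ with hy
    have hzy : ∀ f : StrongDual ℝ X, Tendsto (fun m => f (y m)) atTop (𝓝 (z f)) :=
      fun f => (hz f).comp ((hφ.comp hψ).tendsto_atTop)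
    have hn : c / 2 < ‖inclusionInDoubleDual ℝ X (y n) - z‖ := hφP (ψ n)
    obtain ⟨f, hf1, hf2⟩ :=
      ContinuousLinearMap.exists_lt_apply_of_lt_opNorm (inclusionInDoubleDual ℝ X (y n) - z) hn
    have hval : c / 2 < |f (y n) - z f| := by
      simpa [ContinuousLinearMap.sub_apply, Real.norm_eq_abs] using hf2
    have hδ : (0 : ℝ) < |f (y n) - z f| - c / 2 := by linarith
    have htend : Tendsto (fun m => |f (y m) - z f|) atTop (𝓝 0) := by
      have h5 := (hzy f).sub_const (z f)
      simpa using h5.abs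
    obtain ⟨j, hj1, hj2⟩ :=
      ((htend.eventually (gt_mem_nhds hδ)).and (eventually_ge_atTop n)).exists
    have h3 : |f (y n) - z f| - |f (y j) - z f| ≤ |f (y n) - f (y j)| := by
      have h4 := abs_sub_abs_le_abs_sub (f (y n) - z f) (f (y j) - z f)
      simpa [sub_sub_sub_cancel_right] using h4
    have hfj : c / 2 < |f (y n) - f (y j)| := by linarith
    have hnorm2 : c / 2 < ‖y n - y j‖ := by
      have h4 : |f (y n - y j)| ≤ ‖f‖ * ‖y n - y j‖ := by
        simpa [Real.norm_eq_abs] using f.le_opNorm (y n - y j)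
      have h5 : |f (y n) - f (y j)| = |f (y n - y j)| := by rw [map_sub]
      have h6 : ‖f‖ * ‖y n - y j‖ ≤ 1 * ‖y n - y j‖ :=
        mul_le_mul_of_nonneg_right hf1.le (norm_nonneg _)
      rw [h5] at hfj
      calc c / 2 < |f (y n - y j)| := hfj
        _ ≤ ‖f‖ * ‖y n - y j‖ := h4
        _ ≤ 1 * ‖y n - y j‖ := h6
        _ = ‖y n - y j‖ := one_mul _
    exact le_trans hnorm2.le
      (le_csSup (hBdd y (fun m => ⟨φ (ψ m), rfl⟩) n) ⟨n, j, le_refl n, hj2, rfl⟩)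
  refine ⟨φ, hφ, ?_, fun ψ hψ => hmain ψ hψ⟩
  unfold wca
  have : Nonempty {φ : ℕ → ℕ // StrictMono φ} := ⟨⟨id, strictMono_id⟩⟩
  exact le_ciInf fun ψ => hmain ψ.1 ψ.2

end
end

section
/- Let X and Y be Banach spaces and T : X → Y a bounded linear operator. Then cc(T) ≤ 2·β(T(B_X)), and consequently cc(T) ≤ 4·χ(T(B_X)), where B_X is the closed unit ball of X. -/
open Metric NormedSpace Filter Topology Set

noncomputable section

/-- `β(A) = sup{ wca(x_k) : (x_k) a sequence in A }`. -/
def betaMeasure {Z : Type*} [NormedAddCommGroup Z] (A : Set Z) : ℝ :=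
  sSup {r : ℝ | ∃ x : ℕ → Z, (∀ n, x n ∈ A) ∧ r = wca x}

namespace Statement1Aux

variable {Z : Type*} [NormedAddCommGroup Z]

instance : Nonempty {φ : ℕ → ℕ // StrictMono φ} := ⟨⟨id, strictMono_id⟩⟩

instance : Nonempty {F : Set Z // F.Finite ∧ F.Nonempty} :=
  ⟨⟨{0}, Set.finite_singleton 0, Set.singleton_nonempty 0⟩⟩

def caSet (x : ℕ → Z) (n : ℕ) : Set ℝ :=
  {r : ℝ | ∃ i j : ℕ, n ≤ i ∧ n ≤ j ∧ r = ‖x i - x j‖}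

lemma ca_eq (x : ℕ → Z) : ca x = ⨅ n : ℕ, sSup (caSet x n) := rfl

lemma caSet_nonempty (x : ℕ → Z) (n : ℕ) : (caSet x n).Nonempty :=
  ⟨‖x n - x n‖, n, n, le_refl n, le_refl n, rfl⟩

lemma caSet_nonneg (x : ℕ → Z) (n : ℕ) : ∀ r ∈ caSet x n, 0 ≤ r := by
  rintro r ⟨i, j, _, _, rfl⟩; positivity

lemma sSup_caSet_nonneg (x : ℕ → Z) (n : ℕ) : 0 ≤ sSup (caSet x n) :=
  Real.sSup_nonneg (caSet_nonneg x n)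

lemma caSet_bddAbove {x : ℕ → Z} {C : ℝ} (hC : ∀ n, ‖x n‖ ≤ C) (n : ℕ) :
    BddAbove (caSet x n) := by
  refine ⟨2 * C, ?_⟩
  rintro r ⟨i, j, _, _, rfl⟩
  calc ‖x i - x j‖ ≤ ‖x i‖ + ‖x j‖ := norm_sub_le _ _
    _ ≤ C + C := add_le_add (hC i) (hC j)
    _ = 2 * C := by ring

lemma ca_nonneg (x : ℕ → Z) : 0 ≤ ca x := by
  rw [ca_eq]
  exact le_ciInf fun n => sSup_caSet_nonneg x n

lemma wca_nonneg (x : ℕ → Z) : 0 ≤ wca x :=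
  le_ciInf fun φ => ca_nonneg _

lemma ca_le_sSup (x : ℕ → Z) (n : ℕ) : ca x ≤ sSup (caSet x n) := by
  rw [ca_eq]
  exact ciInf_le ⟨0, by rintro r ⟨m, rfl⟩; exact sSup_caSet_nonneg x m⟩ n

lemma ca_le_bound {x : ℕ → Z} {C : ℝ} (hC : ∀ n, ‖x n‖ ≤ C) : ca x ≤ 2 * C :=
  (ca_le_sSup x 0).trans (csSup_le (caSet_nonempty x 0) (by
    rintro r ⟨i, j, _, _, rfl⟩
    calc ‖x i - x j‖ ≤ ‖x i‖ + ‖x j‖ := norm_sub_le _ _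
      _ ≤ C + C := add_le_add (hC i) (hC j)
      _ = 2 * C := by ring))

lemma wca_le_ca_comp (x : ℕ → Z) (φ : {φ : ℕ → ℕ // StrictMono φ}) :
    wca x ≤ ca (x ∘ φ.1) :=
  ciInf_le ⟨0, by rintro r ⟨ψ, rfl⟩; exact ca_nonneg _⟩ φ

lemma wca_le_ca (x : ℕ → Z) : wca x ≤ ca x := by
  have := wca_le_ca_comp x ⟨id, strictMono_id⟩
  simpa [Function.comp_def] using this

lemma le_wca_of_separated {x : ℕ → Z} {C d : ℝ} (hC : ∀ n, ‖x n‖ ≤ C)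
    (hsep : ∀ i j, i < j → d ≤ ‖x i - x j‖) : d ≤ wca x := by
  refine le_ciInf fun φ => ?_
  rw [ca_eq]
  refine le_ciInf fun n => ?_
  refine le_trans (hsep (φ.1 n) (φ.1 (n + 1)) (φ.2 (Nat.lt_succ_self n)))
    (le_csSup (caSet_bddAbove (fun m => hC (φ.1 m)) n) ?_)
  exact ⟨n, n + 1, le_refl n, Nat.le_succ n, rfl⟩

lemma beta_nonneg (A : Set Z) : 0 ≤ betaMeasure A :=
  Real.sSup_nonneg (by rintro r ⟨x, _, rfl⟩; exact wca_nonneg x)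

lemma wca_mem_le_beta {A : Set Z} {C : ℝ} (hA : ∀ a ∈ A, ‖a‖ ≤ C)
    {x : ℕ → Z} (hx : ∀ n, x n ∈ A) : wca x ≤ betaMeasure A := by
  refine le_csSup ⟨2 * C, ?_⟩ ⟨x, hx, rfl⟩
  rintro r ⟨z, hz, rfl⟩
  exact (wca_le_ca z).trans (ca_le_bound fun n => hA _ (hz n))

lemma dhat_eq (A B : Set Z) : dhat A B = ⨆ a : A, infDist (a : Z) B := rfl

lemma hausdorffChi_eq (A : Set Z) :
    hausdorffChi A = ⨅ F : {F : Set Z // F.Finite ∧ F.Nonempty}, dhat A F.1 := rfl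

lemma chi_nonneg (A : Set Z) : 0 ≤ hausdorffChi A := by
  rw [hausdorffChi_eq]
  exact le_ciInf fun F => Real.iSup_nonneg fun a => infDist_nonneg

lemma wca_le_two_chi {A : Set Z} {C : ℝ}
    (hA : ∀ a ∈ A, ‖a‖ ≤ C) {x : ℕ → Z} (hx : ∀ n, x n ∈ A) :
    wca x ≤ 2 * hausdorffChi A := by
  refine le_of_forall_pos_le_add fun ε hε => ?_
  have hlt : (⨅ F : {F : Set Z // F.Finite ∧ F.Nonempty}, dhat A F.1)
      < hausdorffChi A + ε / 2 := by
    rw [← hausdorffChi_eq]; linarith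
  haveI hne : Nonempty {F : Set Z // F.Finite ∧ F.Nonempty} :=
    ⟨⟨{0}, finite_singleton 0, singleton_nonempty 0⟩⟩
  obtain ⟨F, hF⟩ := exists_lt_of_ciInf_lt hlt
  obtain ⟨f₀, hf₀⟩ := F.2.2
  have hbdd : BddAbove (Set.range fun a : A => infDist (a : Z) F.1) := by
    refine ⟨C + ‖f₀‖, ?_⟩
    rintro r ⟨a, rfl⟩
    calc infDist (a : Z) F.1 ≤ dist (a : Z) f₀ := infDist_le_dist_of_mem hf₀
      _ ≤ ‖(a : Z)‖ + ‖f₀‖ := by rw [dist_eq_norm]; exact norm_sub_le _ _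
      _ ≤ C + ‖f₀‖ := by have := hA a a.2; linarith
  have hinf : ∀ n, infDist (x n) F.1 < hausdorffChi A + ε / 2 := by
    intro n
    have h1 : infDist (x n) F.1 ≤ dhat A F.1 := by
      rw [dhat_eq]
      exact le_ciSup hbdd (⟨x n, hx n⟩ : A)
    exact lt_of_le_of_lt h1 hF
  have hpick : ∀ n, ∃ f ∈ F.1, dist (x n) f < hausdorffChi A + ε / 2 := fun n =>
    (infDist_lt_iff F.2.2).mp (hinf n)
  choose g hg hgd using hpick
  haveI : Finite F.1 := F.2.1
  obtain ⟨f, hf⟩ := Finite.exists_infinite_fiber (fun n : ℕ => (⟨g n, hg n⟩ : F.1))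
  set p : ℕ → Prop := fun n => (⟨g n, hg n⟩ : F.1) = f with hp_def
  have hp : (setOf p).Infinite := by
    rw [← Set.infinite_coe_iff]
    exact hf
  have hmono : StrictMono (Nat.nth p) := Nat.nth_strictMono hp
  have hmem : ∀ k, p (Nat.nth p k) := fun k => Nat.nth_mem_of_infinite hp k
  have hdist : ∀ k, dist (x (Nat.nth p k)) (f : Z) < hausdorffChi A + ε / 2 := by
    intro k
    have h2 : g (Nat.nth p k) = (f : Z) := congrArg Subtype.val (hmem k)
    rw [← h2]
    exact hgd _
  have h1 : wca x ≤ ca (x ∘ Nat.nth p) := wca_le_ca_comp x ⟨Nat.nth p, hmono⟩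
  have h2 : ca (x ∘ Nat.nth p) ≤ 2 * (hausdorffChi A + ε / 2) := by
    refine (ca_le_sSup _ 0).trans (csSup_le (caSet_nonempty _ 0) ?_)
    rintro r ⟨i, j, _, _, rfl⟩
    have hi := hdist i
    have hj := hdist j
    calc ‖(x ∘ Nat.nth p) i - (x ∘ Nat.nth p) j‖
        = dist (x (Nat.nth p i)) (x (Nat.nth p j)) := (dist_eq_norm _ _).symm
      _ ≤ dist (x (Nat.nth p i)) (f : Z) + dist (f : Z) (x (Nat.nth p j)) :=
          dist_triangle _ _ _
      _ ≤ 2 * (hausdorffChi A + ε / 2) := by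
          rw [dist_comm (f : Z)]; linarith
  linarith

lemma key {X Y : Type*} [NormedAddCommGroup X] [NormedSpace ℝ X]
    [NormedAddCommGroup Y] [NormedSpace ℝ Y] (T : X →L[ℝ] Y)
    (x : ℕ → X) (hx : ∀ n, ‖x n‖ ≤ 1) (hwc : WeaklyCauchy x) :
    ca (fun n => T (x n)) ≤ 2 * betaMeasure (T '' closedBall 0 1) := by
  set y : ℕ → Y := fun n => T (x n) with hy
  set A : Set Y := T '' closedBall 0 1 with hA
  have hx' : ∀ n, x n ∈ closedBall (0 : X) 1 := by
    intro n
    simpa [mem_closedBall, dist_eq_norm] using hx n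
  have hAb : ∀ a ∈ A, ‖a‖ ≤ ‖T‖ := by
    rintro a ⟨u, hu, rfl⟩
    have h1 : ‖u‖ ≤ 1 := by simpa [mem_closedBall, dist_eq_norm] using hu
    calc ‖T u‖ ≤ ‖T‖ * ‖u‖ := T.le_opNorm u
      _ ≤ ‖T‖ * 1 := by nlinarith [norm_nonneg T]
      _ = ‖T‖ := mul_one _
  have hyb : ∀ n, ‖y n‖ ≤ ‖T‖ := fun n => hAb _ ⟨x n, hx' n, rfl⟩
  have hβ0 : 0 ≤ betaMeasure A := beta_nonneg A
  have main : ∀ ε : ℝ, 0 < ε → ca y ≤ 2 * betaMeasure A + 2 * ε := by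
    intro ε hε
    by_cases hce : ca y ≤ ε
    · linarith
    push_neg at hce
    have H : ∀ n : ℕ, ∃ q M : ℕ, n ≤ q ∧
        ∀ m, M ≤ m → ca y / 2 - ε ≤ ‖y q - y m‖ := by
      intro n
      have h1 : ca y - ε < sSup (caSet y n) :=
        lt_of_lt_of_le (by linarith) (ca_le_sSup y n)
      obtain ⟨r, hr, hr2⟩ := exists_lt_of_lt_csSup (caSet_nonempty y n) h1
      obtain ⟨i, j, hi, hj, rfl⟩ := hr
      have hne : y i - y j ≠ 0 := by
        intro h0
        rw [h0, norm_zero] at hr2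
        linarith
      obtain ⟨f, hf1, hf2⟩ := exists_dual_vector ℝ (y i - y j) (norm_ne_zero_iff.mpr hne)
      obtain ⟨L, hL⟩ := hwc (f.comp T)
      have hLy : Tendsto (fun n => f (y n)) atTop (nhds L) := hL
      have hfij : f (y i) - f (y j) = ‖y i - y j‖ := by
        rw [← map_sub]
        exact_mod_cast hf2
      have habs : ∀ v : Y, |f v| ≤ ‖v‖ := by
        intro v
        have h3 := f.le_opNorm v
        rw [hf1, one_mul] at h3
        simpa [Real.norm_eq_abs] using h3
      have key2 : (ca y - ε) / 2 < |f (y i) - L| ∨ (ca y - ε) / 2 < |f (y j) - L| := by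
        by_contra h
        push_neg at h
        have h4 := abs_le.mp h.1
        have h5 := abs_le.mp h.2
        have : f (y i) - f (y j) ≤ ca y - ε := by linarith [h4.1, h4.2, h5.1, h5.2]
        linarith [hfij, hr2]
      obtain ⟨M, hM⟩ := (Metric.tendsto_atTop.mp hLy) (ε / 2) (by positivity)
      have key3 : ∀ q : ℕ, (ca y - ε) / 2 < |f (y q) - L| →
          ∀ m, M ≤ m → ca y / 2 - ε ≤ ‖y q - y m‖ := by
        intro q hq m hm
        have h6 : |f (y m) - L| < ε / 2 := by
          have := hM m hm
          rwa [Real.dist_eq] at this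
        have h7 : |f (y q) - f (y m)| ≤ ‖y q - y m‖ := by
          have := habs (y q - y m)
          rwa [map_sub] at this
        have h8 : |f (y q) - L| - |f (y m) - L| ≤ |f (y q) - f (y m)| := by
          have h9 := abs_sub_abs_le_abs_sub (f (y q) - L) (f (y m) - L)
          have h10 : (f (y q) - L) - (f (y m) - L) = f (y q) - f (y m) := by ring
          rwa [h10] at h9
        linarith
      rcases key2 with hq | hq
      · exact ⟨i, M, hi, key3 i hq⟩
      · exact ⟨j, M, hj, key3 j hq⟩
    choose P M hP hM using H
    set a : ℕ → ℕ := fun k => Nat.rec 0 (fun _ ak => max (P ak) (M ak) + 1) k with ha_def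
    have ha_succ : ∀ k, a (k + 1) = max (P (a k)) (M (a k)) + 1 := fun k => rfl
    have ha_mono : StrictMono a := by
      apply strictMono_nat_of_lt_succ
      intro k
      have h1 := hP (a k)
      rw [ha_succ]
      omega
    have hsep : ∀ k l, k < l → ca y / 2 - ε ≤ ‖y (P (a k)) - y (P (a l))‖ := by
      intro k l hkl
      apply hM (a k)
      have h1 : M (a k) < a (k + 1) := by rw [ha_succ]; omega
      have h2 : a (k + 1) ≤ a l := ha_mono.monotone (Nat.succ_le_of_lt hkl)
      have h3 := hP (a l)
      omega
    set z : ℕ → Y := fun k => y (P (a k)) with hz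
    have hzA : ∀ k, z k ∈ A := fun k => ⟨x (P (a k)), hx' _, rfl⟩
    have h5 : ca y / 2 - ε ≤ wca z :=
      le_wca_of_separated (fun k => hyb (P (a k))) hsep
    have h6 : wca z ≤ betaMeasure A := wca_mem_le_beta hAb hzA
    linarith
  refine le_of_forall_pos_le_add fun ε hε => ?_
  have := main (ε / 2) (by positivity)
  linarith

end Statement1Aux

/-- For a bounded operator `T : X → Y` between Banach spaces,
`cc(T) ≤ 2 β(T(B_X))` and consequently `cc(T) ≤ 4 χ(T(B_X))`. -/
theorem statement1 {X Y : Type*} [NormedAddCommGroup X] [NormedSpace ℝ X] [CompleteSpace X]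
    [NormedAddCommGroup Y] [NormedSpace ℝ Y] [CompleteSpace Y] (T : X →L[ℝ] Y) :
    cc T ≤ 2 * betaMeasure (T '' closedBall 0 1) ∧
    cc T ≤ 4 * hausdorffChi (T '' closedBall 0 1) := by
  have hAb : ∀ a ∈ (T '' closedBall 0 1), ‖a‖ ≤ ‖T‖ := by
    rintro a ⟨u, hu, rfl⟩
    have h1 : ‖u‖ ≤ 1 := by simpa [mem_closedBall, dist_eq_norm] using hu
    calc ‖T u‖ ≤ ‖T‖ * ‖u‖ := T.le_opNorm u
      _ ≤ ‖T‖ * 1 := by nlinarith [norm_nonneg T]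
      _ = ‖T‖ := mul_one _
  have hβ0 := Statement1Aux.beta_nonneg (T '' closedBall 0 1)
  have hχ0 := Statement1Aux.chi_nonneg (T '' closedBall 0 1)
  have h1 : cc T ≤ 2 * betaMeasure (T '' closedBall 0 1) := by
    apply Real.sSup_le
    · rintro r ⟨x, hx, hwc, rfl⟩
      exact Statement1Aux.key T x hx hwc
    · linarith
  have h2 : betaMeasure (T '' closedBall 0 1) ≤ 2 * hausdorffChi (T '' closedBall 0 1) := by
    apply Real.sSup_le
    · rintro r ⟨x, hx, rfl⟩
      exact Statement1Aux.wca_le_two_chi hAb hx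
    · linarith
  exact ⟨h1, by linarith⟩

end
end

section
/- Let X and Y be Banach spaces, T : X → Y a bounded linear operator with adjoint T* : Y* → X*, and let (y*_ν)_{ν∈Λ} be a ρ*-Cauchy net in the closed unit ball B_{Y*}. Then inf_{ν₀∈Λ} sup_{ν,ν'≥ν₀} ‖T* y*_ν − T* y*_{ν'}‖ ≤ 2·ω(T(B_X)). -/
open Metric NormedSpace Filter Topology Set
open Pointwise

noncomputable section

/-- A net `(y*_ν)` in `B_{Y*}` is ρ*-Cauchy if it is uniformly Cauchy on every weakly
compact subset of `B_Y`. -/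
def RhoStarCauchyNet {Y : Type*} [NormedAddCommGroup Y] [NormedSpace ℝ Y]
    {Λ : Type*} [Preorder Λ] (y : Λ → StrongDual ℝ Y) : Prop :=
  ∀ K : Set Y, K ⊆ closedBall 0 1 → IsWeaklyCompact K → ∀ ε > (0 : ℝ), ∃ ν₀ : Λ,
    ∀ ν ν' : Λ, ν₀ ≤ ν → ν₀ ≤ ν' → ∀ v ∈ K, |y ν v - y ν' v| ≤ ε

lemma weaklyCompact_bounded {Z : Type*} [NormedAddCommGroup Z] [NormedSpace ℝ Z]
    {K : Set Z} (hK : IsWeaklyCompact K) : ∃ M : ℝ, ∀ z ∈ K, ‖z‖ ≤ M := by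
  have hpt : ∀ f : StrongDual ℝ Z, ∃ C : ℝ,
      ∀ z : K, ‖inclusionInDoubleDual ℝ Z (z : Z) f‖ ≤ C := by
    intro f
    have hcont : Continuous fun w : WeakSpace ℝ Z => (topDualPairing ℝ Z).flip w f :=
      WeakBilin.eval_continuous _ f
    have himg : IsCompact ((fun w : WeakSpace ℝ Z => (topDualPairing ℝ Z).flip w f) ''
        (toWeakSpace ℝ Z '' K)) := hK.image hcont
    obtain ⟨C, hC⟩ := himg.isBounded.exists_norm_le
    refine ⟨C, fun z => ?_⟩
    have hmem : f (z : Z) ∈ ((fun w : WeakSpace ℝ Z => (topDualPairing ℝ Z).flip w f) ''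
        (toWeakSpace ℝ Z '' K)) :=
      ⟨toWeakSpace ℝ Z (z : Z), Set.mem_image_of_mem _ z.2, rfl⟩
    simpa using hC _ hmem
  obtain ⟨C', hC'⟩ := banach_steinhaus
    (g := fun z : K => inclusionInDoubleDual ℝ Z (z : Z)) hpt
  refine ⟨C', fun z hz => ?_⟩
  have h1 := hC' ⟨z, hz⟩
  have hnorm : ‖inclusionInDoubleDual ℝ Z z‖ = ‖z‖ :=
    (inclusionInDoubleDualLi ℝ (E := Z)).norm_map z
  rw [← hnorm]
  exact h1

lemma weaklyCompact_smul {Z : Type*} [NormedAddCommGroup Z] [NormedSpace ℝ Z]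
    (c : ℝ) {K : Set Z} (hK : IsWeaklyCompact K) : IsWeaklyCompact (c • K) := by
  have hcont : Continuous fun w : WeakSpace ℝ Z => (c • w : WeakSpace ℝ Z) := by
    apply WeakBilin.continuous_of_continuous_eval
    intro f
    have h := (WeakBilin.eval_continuous ((topDualPairing ℝ Z).flip) f).const_smul c
    refine (show Continuous (fun w : WeakSpace ℝ Z => c • ((topDualPairing ℝ Z).flip w) f)
      from h).congr ?_
    intro w
    change c * f w = f (c • w)
    exact (f.map_smul c w).symm
  have himage : toWeakSpace ℝ Z '' (c • K)
      = (fun w : WeakSpace ℝ Z => c • w) '' (toWeakSpace ℝ Z '' K) := by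
    rw [Set.image_image]
    ext w
    constructor
    · rintro ⟨z, ⟨k, hk, rfl⟩, rfl⟩
      exact ⟨k, hk, (map_smul (toWeakSpace ℝ Z) c k).symm⟩
    · rintro ⟨k, hk, rfl⟩
      exact ⟨c • k, ⟨k, hk, rfl⟩, map_smul (toWeakSpace ℝ Z) c k⟩
  rw [IsWeaklyCompact, himage]
  exact hK.image hcont

/-- For a bounded operator `T : X → Y` and a ρ*-Cauchy net `(y*_ν)` in `B_{Y*}`,
`inf_{ν₀} sup_{ν,ν' ≥ ν₀} ‖T* y*_ν − T* y*_{ν'}‖ ≤ 2 ω(T(B_X))`. -/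
theorem statement3 {X Y : Type*} [NormedAddCommGroup X] [NormedSpace ℝ X] [CompleteSpace X]
    [NormedAddCommGroup Y] [NormedSpace ℝ Y] [CompleteSpace Y] (T : X →L[ℝ] Y)
    {Λ : Type*} [Preorder Λ] [Nonempty Λ] (hdir : ∀ a b : Λ, ∃ c : Λ, a ≤ c ∧ b ≤ c)
    (y : Λ → StrongDual ℝ Y) (hy : ∀ ν, ‖y ν‖ ≤ 1) (hcauchy : RhoStarCauchyNet y) :
    (⨅ ν₀ : Λ, sSup {r : ℝ | ∃ ν ν' : Λ, ν₀ ≤ ν ∧ ν₀ ≤ ν' ∧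
        r = ‖adjointOp T (y ν) - adjointOp T (y ν')‖}) ≤
      2 * deBlasiOmega (T '' closedBall 0 1) := by
  set A : Set Y := T '' closedBall 0 1 with hA
  have hadj : ∀ g : StrongDual ℝ Y, ∀ x : X, adjointOp T g x = g (T x) := fun g x => rfl
  have hadjnorm : ∀ ν, ‖adjointOp T (y ν)‖ ≤ ‖T‖ := by
    intro ν
    have he : adjointOp T (y ν) = (y ν).comp T := rfl
    rw [he]
    calc ‖(y ν).comp T‖ ≤ ‖y ν‖ * ‖T‖ := ContinuousLinearMap.opNorm_comp_le _ _
      _ ≤ 1 * ‖T‖ := mul_le_mul_of_nonneg_right (hy ν) (norm_nonneg T)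
      _ = ‖T‖ := one_mul _
  have hSbdd : ∀ ν₁ : Λ, BddAbove {r : ℝ | ∃ ν ν' : Λ, ν₁ ≤ ν ∧ ν₁ ≤ ν' ∧
      r = ‖adjointOp T (y ν) - adjointOp T (y ν')‖} := by
    intro ν₁
    refine ⟨2 * ‖T‖, ?_⟩
    rintro r ⟨ν, ν', -, -, rfl⟩
    calc ‖adjointOp T (y ν) - adjointOp T (y ν')‖
        ≤ ‖adjointOp T (y ν)‖ + ‖adjointOp T (y ν')‖ := norm_sub_le _ _
      _ ≤ ‖T‖ + ‖T‖ := add_le_add (hadjnorm ν) (hadjnorm ν')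
      _ = 2 * ‖T‖ := by ring
  have hSnonneg : ∀ ν₁ : Λ, (0:ℝ) ≤ sSup {r : ℝ | ∃ ν ν' : Λ, ν₁ ≤ ν ∧ ν₁ ≤ ν' ∧
      r = ‖adjointOp T (y ν) - adjointOp T (y ν')‖} := by
    intro ν₁
    exact le_csSup (hSbdd ν₁) ⟨ν₁, ν₁, le_refl _, le_refl _, by simp⟩
  have hωnonneg : 0 ≤ deBlasiOmega A :=
    Real.iInf_nonneg fun K => Real.iSup_nonneg fun a => infDist_nonneg
  refine le_of_forall_pos_le_add ?_
  intro ε hε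
  set δ : ℝ := ε / 5 with hδ
  have hδpos : 0 < δ := by positivity
  haveI : Nonempty {K : Set Y // K.Nonempty ∧ IsWeaklyCompact K} :=
    ⟨⟨{0}, ⟨0, rfl⟩, by
      simpa [IsWeaklyCompact, Set.image_singleton] using isCompact_singleton⟩⟩
  obtain ⟨⟨K', hK'ne, hK'wc⟩, hK'lt⟩ :=
    exists_lt_of_ciInf_lt (show (⨅ K : {K : Set Y // K.Nonempty ∧ IsWeaklyCompact K}, dhat A K)
      < deBlasiOmega A + δ from lt_add_of_pos_right _ hδpos)
  obtain ⟨M₀, hM₀⟩ := weaklyCompact_bounded hK'wc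
  set M : ℝ := max M₀ 1 with hM
  have hM1 : (1:ℝ) ≤ M := le_max_right _ _
  have hMpos : (0:ℝ) < M := lt_of_lt_of_le one_pos hM1
  have hKsub : (M⁻¹ • K' : Set Y) ⊆ closedBall 0 1 := by
    rintro z ⟨k, hk, rfl⟩
    rw [mem_closedBall_zero_iff, norm_smul, norm_inv, Real.norm_eq_abs, abs_of_pos hMpos]
    have hk' : ‖k‖ ≤ M := le_trans (hM₀ k hk) (le_max_left _ _)
    calc M⁻¹ * ‖k‖ ≤ M⁻¹ * M := by
          exact mul_le_mul_of_nonneg_left hk' (inv_nonneg.mpr hMpos.le)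
      _ = 1 := inv_mul_cancel₀ hMpos.ne'
  obtain ⟨ν₀, hν₀⟩ := hcauchy _ hKsub (weaklyCompact_smul M⁻¹ hK'wc) (δ / M) (by positivity)
  have hkey : ∀ ν ν', ν₀ ≤ ν → ν₀ ≤ ν' → ∀ k ∈ K', |y ν k - y ν' k| ≤ δ := by
    intro ν ν' h h' k hk
    have hv : M⁻¹ • k ∈ (M⁻¹ • K' : Set Y) := ⟨k, hk, rfl⟩
    have h2 := hν₀ ν ν' h h' _ hv
    rw [map_smul, map_smul, ← smul_sub, smul_eq_mul, abs_mul,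
      abs_of_pos (inv_pos.mpr hMpos)] at h2
    calc |y ν k - y ν' k| = M * (M⁻¹ * |y ν k - y ν' k|) := by field_simp
      _ ≤ M * (δ / M) := mul_le_mul_of_nonneg_left h2 hMpos.le
      _ = δ := by field_simp
  refine le_trans (ciInf_le ⟨0, ?_⟩ ν₀) ?_
  · rintro r ⟨ν₁, rfl⟩
    exact hSnonneg ν₁
  have hC : (0:ℝ) ≤ 2 * deBlasiOmega A + ε := by linarith
  apply Real.sSup_le _ hC
  rintro r ⟨ν, ν', hν, hν', rfl⟩
  set D : StrongDual ℝ X := adjointOp T (y ν) - adjointOp T (y ν') with hD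
  have hcore : ∀ x : X, ‖x‖ ≤ 1 → ‖D x‖ ≤ 2 * deBlasiOmega A + ε := by
    intro x hx
    have hTx : T x ∈ A := ⟨x, by simpa [mem_closedBall_zero_iff] using hx, rfl⟩
    have hinf : infDist (T x) K' ≤ dhat A K' := by
      obtain ⟨k₀, hk₀⟩ := hK'ne
      refine le_ciSup_of_le ⟨‖T‖ + ‖k₀‖, ?_⟩ (⟨T x, hTx⟩ : A) le_rfl
      rintro s ⟨⟨a, ⟨x', hx', rfl⟩⟩, rfl⟩
      have hx'1 : ‖x'‖ ≤ 1 := by simpa [mem_closedBall_zero_iff] using hx'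
      calc infDist (T x') K' ≤ dist (T x') k₀ := infDist_le_dist_of_mem hk₀
        _ ≤ ‖T x'‖ + ‖k₀‖ := by rw [dist_eq_norm]; exact norm_sub_le _ _
        _ ≤ ‖T‖ + ‖k₀‖ := by
            have h1 : ‖T x'‖ ≤ ‖T‖ * ‖x'‖ := T.le_opNorm x'
            have h2 : ‖T‖ * ‖x'‖ ≤ ‖T‖ * 1 :=
              mul_le_mul_of_nonneg_left hx'1 (norm_nonneg T)
            linarith
    have hlt : infDist (T x) K' < deBlasiOmega A + 2 * δ := by
      have : dhat A K' < deBlasiOmega A + δ := hK'lt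
      linarith
    obtain ⟨k, hk, hdist⟩ := (infDist_lt_iff hK'ne).mp hlt
    have hdn : ‖T x - k‖ ≤ deBlasiOmega A + 2 * δ := by
      rw [← dist_eq_norm]; exact hdist.le
    have hb : ∀ μ : Λ, ‖y μ (T x - k)‖ ≤ deBlasiOmega A + 2 * δ := by
      intro μ
      calc ‖y μ (T x - k)‖ ≤ ‖y μ‖ * ‖T x - k‖ := (y μ).le_opNorm _
        _ ≤ 1 * ‖T x - k‖ := mul_le_mul_of_nonneg_right (hy μ) (norm_nonneg _)
        _ = ‖T x - k‖ := one_mul _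
        _ ≤ _ := hdn
    have h3 := hkey ν ν' hν hν' k hk
    have hDx : D x = (y ν (T x - k) - y ν' (T x - k)) + (y ν k - y ν' k) := by
      have he : D x = y ν (T x) - y ν' (T x) := rfl
      rw [he, map_sub, map_sub]; ring
    rw [hDx]
    have h1 := hb ν
    have h2 := hb ν'
    rw [Real.norm_eq_abs] at h1 h2 ⊢
    have habs : |(y ν (T x - k) - y ν' (T x - k)) + (y ν k - y ν' k)|
        ≤ |y ν (T x - k)| + |y ν' (T x - k)| + |y ν k - y ν' k| := by
      calc _ ≤ |y ν (T x - k) - y ν' (T x - k)| + |y ν k - y ν' k| := abs_add_le _ _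
        _ ≤ (|y ν (T x - k)| + |y ν' (T x - k)|) + |y ν k - y ν' k| := by
            exact add_le_add (abs_sub _ _) le_rfl
    have hδε : 5 * δ = ε := by rw [hδ]; ring
    calc _ ≤ |y ν (T x - k)| + |y ν' (T x - k)| + |y ν k - y ν' k| := habs
      _ ≤ (deBlasiOmega A + 2 * δ) + (deBlasiOmega A + 2 * δ) + δ := by
          exact add_le_add (add_le_add h1 h2) h3
      _ = 2 * deBlasiOmega A + 5 * δ := by ring
      _ = 2 * deBlasiOmega A + ε := by rw [hδε]
  apply ContinuousLinearMap.opNorm_le_bound D hC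
  intro x
  rcases eq_or_ne x 0 with rfl | hx0
  · simp
  · have hxpos : 0 < ‖x‖ := norm_pos_iff.mpr hx0
    have hx1 : ‖‖x‖⁻¹ • x‖ ≤ 1 := by
      rw [norm_smul, norm_inv, norm_norm, inv_mul_cancel₀ hxpos.ne']
    have hc := hcore _ hx1
    rw [map_smul, norm_smul, norm_inv, norm_norm] at hc
    calc ‖D x‖ = ‖x‖ * (‖x‖⁻¹ * ‖D x‖) := by field_simp
      _ ≤ ‖x‖ * (2 * deBlasiOmega A + ε) := mul_le_mul_of_nonneg_left hc (norm_nonneg x)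
      _ = (2 * deBlasiOmega A + ε) * ‖x‖ := mul_comm _ _


end
end

section
/- Let X be a Banach space with the Dunford–Pettis property, i.e., x*_n(x_n) → 0 whenever (x_n) is a weakly null sequence in X and (x*_n) is a weakly null sequence in X*. Then for every bounded sequence (x_n) in X: wca_ρ(x_n) ≤ 2·ω({x_n : n ∈ ℕ}). -/
open Metric NormedSpace Filter Topology Set

noncomputable section

section Aux
variable {Z : Type*} [NormedAddCommGroup Z] [NormedSpace ℝ Z]


lemma my_le_of_forall_pos_le_add {a b : ℝ} (h : ∀ ε : ℝ, 0 < ε → a ≤ b + ε) : a ≤ b := by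
  by_contra hc
  push_neg at hc
  have := h ((a - b)/2) (by linarith)
  linarith

lemma mapClusterPt_eval {s : ℕ → Z} {w : WeakSpace ℝ Z}
    (hw : MapClusterPt w atTop (fun n => toWeakSpace ℝ Z (s n))) (f : StrongDual ℝ Z) :
    MapClusterPt (f ((toWeakSpace ℝ Z).symm w)) atTop (fun n => f (s n)) := by
  have hc : Continuous (fun w : WeakSpace ℝ Z => f ((toWeakSpace ℝ Z).symm w)) :=
    WeakBilin.eval_continuous _ f
  have hca := @Continuous.continuousAt (WeakSpace ℝ Z) ℝ _ _ _ w hc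
  exact MapClusterPt.tendsto_comp (f := fun w' => f ((toWeakSpace ℝ Z).symm w')) hca hw

lemma mapClusterPt_eval' {s : ℕ → Z} {u : Z}
    (hw : MapClusterPt (toWeakSpace ℝ Z u) atTop (fun n => toWeakSpace ℝ Z (s n)))
    (f : StrongDual ℝ Z) :
    MapClusterPt (f u) atTop (fun n => f (s n)) := by
  have := mapClusterPt_eval hw f
  simpa using this

lemma clusterPt_eq_of_tendsto {v : ℕ → ℝ} {a b : ℝ}
    (h : MapClusterPt a atTop v) (h2 : Tendsto v atTop (nhds b)) : a = b :=
  eq_of_nhds_neBot (h.clusterPt.mono h2)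

lemma exists_weak_mapClusterPt {K : Set Z} (hK : IsCompact (toWeakSpace ℝ Z '' K))
    (s : ℕ → Z) (hs : ∀ n, s n ∈ K) :
    ∃ u ∈ K, MapClusterPt (toWeakSpace ℝ Z u) atTop (fun n => toWeakSpace ℝ Z (s n)) := by
  have hmap : Filter.map (fun n => toWeakSpace ℝ Z (s n)) atTop ≤
      Filter.principal (toWeakSpace ℝ Z '' K) := by
    rw [Filter.le_principal_iff, Filter.mem_map]
    exact Filter.univ_mem' fun n => mem_image_of_mem (toWeakSpace ℝ Z) (hs n)
  obtain ⟨w, hwmem, hw⟩ := hK.exists_mapClusterPt (f := atTop)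
    (u := fun n => toWeakSpace ℝ Z (s n)) hmap
  obtain ⟨u, huK, rfl⟩ := hwmem
  exact ⟨u, huK, hw⟩

lemma weakCluster_mem_closed_submodule {Y : Submodule ℝ Z} (hY : IsClosed (Y : Set Z))
    {s : ℕ → Z} (hs : ∀ n, s n ∈ Y) {u : Z}
    (hu : MapClusterPt (toWeakSpace ℝ Z u) atTop (fun n => toWeakSpace ℝ Z (s n))) :
    u ∈ Y := by
  by_contra hnot
  obtain ⟨h, c, hc1, hc2⟩ := geometric_hahn_banach_closed_point Y.convex hY hnot
  have hzero : ∀ y ∈ Y, h y = 0 := by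
    intro y hy
    by_contra hne
    have h1 := hc1 (((c + 1) / h y) • y) (Y.smul_mem _ hy)
    rw [map_smul, smul_eq_mul, div_mul_cancel₀ _ hne] at h1
    linarith
  have h0 : (0 : ℝ) < c := by simpa using hc1 0 Y.zero_mem
  have hcl : MapClusterPt (h u) atTop (fun n => h (s n)) := mapClusterPt_eval' hu h
  have hhu : h u = 0 := by
    refine clusterPt_eq_of_tendsto hcl ?_
    have : (fun n => h (s n)) = fun _ => (0 : ℝ) := funext fun n => hzero _ (hs n)
    rw [this]; exact tendsto_const_nhds
  linarith

/-- Eberlein–Šmulian (light): a sequence in a weakly compact set has a weakly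
convergent subsequence. -/
lemma exists_weak_conv_subseq {K : Set Z} (hK : IsCompact (toWeakSpace ℝ Z '' K))
    (k : ℕ → Z) (hk : ∀ n, k n ∈ K) :
    ∃ φ : ℕ → ℕ, StrictMono φ ∧ ∃ u : Z,
      ∀ f : StrongDual ℝ Z, Tendsto (fun n => f (k (φ n))) atTop (nhds (f u)) := by
  classical
  set Y : Submodule ℝ Z := (Submodule.span ℝ (Set.range k)).topologicalClosure with hYdef
  have hYclosed : IsClosed (Y : Set Z) := Submodule.isClosed_topologicalClosure _
  have hkY : ∀ n, k n ∈ Y := fun n =>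
    Submodule.le_topologicalClosure _ (Submodule.subset_span (mem_range_self n))
  have hsep : TopologicalSpace.IsSeparable
      ((Submodule.span ℝ (Set.range k) : Submodule ℝ Z) : Set Z) :=
    (Set.countable_range k).isSeparable.span
  obtain ⟨D, Dcnt, hD⟩ := hsep
  have hYD : (Y : Set Z) ⊆ closure D := by
    rw [hYdef, Submodule.topologicalClosure_coe]
    exact closure_minimal hD isClosed_closure
  have hD0 : D.Nonempty := by
    rw [← closure_nonempty_iff]
    exact ⟨0, hYD Y.zero_mem⟩
  obtain ⟨e, he⟩ := Dcnt.exists_eq_range hD0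
  choose g hg1 hg2' using fun m => exists_dual_vector'' ℝ (e m)
  have hg2 : ∀ m, g m (e m) = ‖e m‖ := fun m => by exact_mod_cast hg2' m
  -- totality of (g m) on closure D
  have total : ∀ z ∈ closure D, (∀ m, g m z = 0) → z = 0 := by
    intro z hz hz0
    have key : ∀ ε : ℝ, 0 < ε → ‖z‖ ≤ 0 + 2 * ε := by
      intro ε hε
      obtain ⟨d, hdD, hdist⟩ := Metric.mem_closure_iff.mp hz ε hε
      obtain ⟨m, rfl⟩ : ∃ m, e m = d := by
        have : d ∈ Set.range e := he ▸ hdD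
        exact this
      have h1 : ‖e m‖ ≤ ‖e m - z‖ := by
        have : g m (e m - z) = ‖e m‖ := by rw [map_sub, hz0 m, sub_zero, hg2 m]
        calc ‖e m‖ = g m (e m - z) := this.symm
          _ ≤ |g m (e m - z)| := le_abs_self _
          _ ≤ ‖g m‖ * ‖e m - z‖ := (g m).le_opNorm _
          _ ≤ 1 * ‖e m - z‖ := by
              exact mul_le_mul_of_nonneg_right (hg1 m) (norm_nonneg _)
          _ = ‖e m - z‖ := one_mul _
      have h2 : ‖e m - z‖ < ε := by rwa [norm_sub_rev, ← dist_eq_norm]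
      calc ‖z‖ ≤ ‖e m‖ + ‖z - e m‖ := by
            simpa using norm_add_le (e m) (z - e m)
        _ ≤ ‖e m - z‖ + ‖z - e m‖ := by linarith
        _ = ‖e m - z‖ + ‖e m - z‖ := by rw [norm_sub_rev z]
        _ ≤ 0 + 2 * ε := by linarith
    have : ‖z‖ ≤ 0 := by
      refine my_le_of_forall_pos_le_add fun ε hε => ?_
      have := key (ε / 2) (by linarith)
      linarith
    simpa using le_antisymm this (norm_nonneg z)
  -- diagonal extraction via compact metrizable product
  set T : WeakSpace ℝ Z → (ℕ → ℝ) := fun wp m => g m ((toWeakSpace ℝ Z).symm wp) with hTdef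
  have hTc : Continuous T :=
    continuous_pi fun m => WeakBilin.eval_continuous _ (g m)
  have hcomp : IsCompact (T '' (toWeakSpace ℝ Z '' K)) := hK.image hTc
  obtain ⟨p, hp, φ, hφ, hconv⟩ := hcomp.tendsto_subseq
    (x := fun n => T (toWeakSpace ℝ Z (k n)))
    (fun n => mem_image_of_mem _ (mem_image_of_mem _ (hk n)))
  have hgm : ∀ m, Tendsto (fun n => g m (k (φ n))) atTop (nhds (p m)) := by
    intro m
    have := tendsto_pi_nhds.mp hconv m
    simpa [hTdef] using this
  obtain ⟨u, huK, hu⟩ := exists_weak_mapClusterPt hK (fun n => k (φ n)) (fun n => hk (φ n))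
  have huY : u ∈ Y := weakCluster_mem_closed_submodule hYclosed (fun n => hkY (φ n)) hu
  have hup : ∀ m, g m u = p m := fun m =>
    clusterPt_eq_of_tendsto (mapClusterPt_eval' hu (g m)) (hgm m)
  refine ⟨φ, hφ, u, fun f => ?_⟩
  refine tendsto_of_subseq_tendsto fun ns hns => ?_
  have hevc : Continuous (fun wp : WeakSpace ℝ Z => f ((toWeakSpace ℝ Z).symm wp)) :=
    WeakBilin.eval_continuous _ f
  obtain ⟨c, hcC, ms, hms, hbc⟩ := (hK.image hevc).tendsto_subseq
    (x := fun n => f (k (φ (ns n))))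
    (fun n => mem_image_of_mem _ (mem_image_of_mem _ (hk _)))
  obtain ⟨v, hvK, hv⟩ := exists_weak_mapClusterPt hK (fun n => k (φ (ns (ms n))))
    (fun n => hk _)
  have hmsat : Tendsto (fun n => ns (ms n)) atTop atTop := hns.comp hms.tendsto_atTop
  have hfv : f v = c := clusterPt_eq_of_tendsto (mapClusterPt_eval' hv f) hbc
  have hgv : ∀ m, g m v = p m := by
    intro m
    refine clusterPt_eq_of_tendsto (mapClusterPt_eval' hv (g m)) ?_
    exact (hgm m).comp hmsat
  have hvY : v ∈ Y := weakCluster_mem_closed_submodule hYclosed (fun n => hkY _) hv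
  have huv : u = v := by
    have hmem : u - v ∈ Y := Y.sub_mem huY hvY
    have := total (u - v) (hYD hmem) fun m => by
      rw [map_sub, hup m, hgv m, sub_self]
    exact sub_eq_zero.mp this
  exact ⟨ms, by rw [huv, hfv]; exact hbc⟩

end Aux

lemma DP_uniform {X : Type*} [NormedAddCommGroup X] [NormedSpace ℝ X]
    (hDP : ∀ (x : ℕ → X) (f : ℕ → StrongDual ℝ X), WeaklyNull x → WeaklyNull f →
      Tendsto (fun n => f n (x n)) atTop (nhds 0))
    (z : ℕ → X) (hz : WeaklyNull z)
    {K : Set (StrongDual ℝ X)} (hK : IsCompact (toWeakSpace ℝ (StrongDual ℝ X) '' K))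
    (δ : ℝ) (hδ : 0 < δ) :
    ∃ N, ∀ n ≥ N, ∀ f ∈ K, |f (z n)| ≤ δ := by
  by_contra hcon
  push_neg at hcon
  have hfreq : ∃ᶠ n in atTop, ∃ f ∈ K, δ < |f (z n)| := by
    rw [frequently_atTop]
    intro N
    obtain ⟨n, hn, f, hfK, hfδ⟩ := hcon N
    exact ⟨n, hn, f, hfK, hfδ⟩
  obtain ⟨ψ0, hψ0, hP⟩ := extraction_of_frequently_atTop hfreq
  choose F hFK hFδ using hP
  obtain ⟨ψ, hψ, f₀, hf₀⟩ := exists_weak_conv_subseq hK F hFK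
  have hg : WeaklyNull (fun l => F (ψ l) - f₀) := by
    intro Φ
    have h := (hf₀ Φ).sub (tendsto_const_nhds (x := Φ f₀))
    simpa [map_sub] using h
  have hw : WeaklyNull (fun l => z (ψ0 (ψ l))) := by
    intro f
    exact (hz f).comp ((hψ0.comp hψ).tendsto_atTop)
  have h1 := hDP _ _ hw hg
  have h2 : Tendsto (fun l => f₀ (z (ψ0 (ψ l)))) atTop (nhds 0) := hw f₀
  have h3 : Tendsto (fun l => F (ψ l) (z (ψ0 (ψ l)))) atTop (nhds 0) := by
    have h4 := h1.add h2
    simpa [ContinuousLinearMap.sub_apply] using h4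
  have h5 : ∀ᶠ l in atTop, |F (ψ l) (z (ψ0 (ψ l)))| < δ := by
    have hmem : Set.Ioo (-δ) δ ∈ nhds (0 : ℝ) := Ioo_mem_nhds (by linarith) hδ
    filter_upwards [h3.eventually_mem hmem] with l hl
    exact abs_lt.mpr ⟨hl.1, hl.2⟩
  obtain ⟨l, hl⟩ := h5.exists
  exact absurd (hFδ (ψ l)) (not_lt.mpr hl.le)

lemma caRho_nonneg {Z : Type*} [NormedAddCommGroup Z] [NormedSpace ℝ Z] (y : ℕ → Z) :
    0 ≤ caRho y := by
  refine Real.iSup_nonneg fun K => Real.iInf_nonneg fun n => Real.sSup_nonneg ?_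
  rintro r ⟨i, j, _, _, f, _, rfl⟩
  exact abs_nonneg _

lemma deBlasiOmega_nonneg {Z : Type*} [NormedAddCommGroup Z] [NormedSpace ℝ Z] (A : Set Z) :
    0 ≤ deBlasiOmega A := by
  refine Real.iInf_nonneg fun K => Real.iSup_nonneg fun a => infDist_nonneg


/-- If `X` has the Dunford–Pettis property, then for every bounded sequence
`(x_n)` in `X`, `wca_ρ(x_n) ≤ 2 ω({x_n : n ∈ ℕ})`. -/
theorem statement6 {X : Type*} [NormedAddCommGroup X] [NormedSpace ℝ X] [CompleteSpace X]
    (hDP : ∀ (x : ℕ → X) (f : ℕ → StrongDual ℝ X), WeaklyNull x → WeaklyNull f →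
      Tendsto (fun n => f n (x n)) atTop (nhds 0))
    (x : ℕ → X) (hx : ∃ M : ℝ, ∀ n, ‖x n‖ ≤ M) :
    wcaRho x ≤ 2 * deBlasiOmega (Set.range x) := by
  obtain ⟨M, hM⟩ := hx
  set ω := deBlasiOmega (Set.range x) with hωdef
  have homega0 : 0 ≤ ω := deBlasiOmega_nonneg _
  refine my_le_of_forall_pos_le_add fun ε hε => ?_
  -- choose a nonempty weakly compact K₀ almost attaining the de Blasi measure
  haveI hne : Nonempty {K : Set X // K.Nonempty ∧ IsWeaklyCompact K} := by
    refine ⟨⟨{0}, ⟨0, rfl⟩, ?_⟩⟩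
    unfold IsWeaklyCompact
    rw [Set.image_singleton]
    exact isCompact_singleton
  have hlt : (⨅ K : {K : Set X // K.Nonempty ∧ IsWeaklyCompact K},
      dhat (Set.range x) K.1) < ω + ε / 4 := by
    have : ω < ω + ε / 4 := by linarith
    exact this
  obtain ⟨⟨K₀, hK₀ne, hK₀c⟩, hK₀lt⟩ := exists_lt_of_ciInf_lt hlt
  obtain ⟨k₀, hk₀⟩ := hK₀ne
  have hBdd : BddAbove (Set.range fun a : (Set.range x) => infDist (a : X) K₀) := by
    refine ⟨M + ‖k₀‖, ?_⟩
    rintro r ⟨a, rfl⟩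
    obtain ⟨n, hn⟩ := a.2
    calc infDist (a : X) K₀ ≤ dist (a : X) k₀ := infDist_le_dist_of_mem hk₀
      _ ≤ ‖(a : X)‖ + ‖k₀‖ := by rw [dist_eq_norm]; exact norm_sub_le _ _
      _ ≤ M + ‖k₀‖ := by
          have : ‖(a : X)‖ ≤ M := by rw [← hn]; exact hM n
          linarith
  have hinf : ∀ n, infDist (x n) K₀ < ω + ε / 4 := by
    intro n
    have h1 : infDist (x n) K₀ ≤ dhat (Set.range x) K₀ :=
      le_ciSup hBdd (⟨x n, mem_range_self n⟩ : (Set.range x))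
    exact h1.trans_lt hK₀lt
  choose kk hkK hkd using fun n => (Metric.infDist_lt_iff ⟨k₀, hk₀⟩).mp (hinf n)
  obtain ⟨φ, hφ, u, hu⟩ := exists_weak_conv_subseq hK₀c kk hkK
  have hz : WeaklyNull (fun n => kk (φ n) - u) := by
    intro f
    have h := (hu f).sub (tendsto_const_nhds (x := f u))
    simpa [map_sub] using h
  -- bound caRho (x ∘ φ)
  have hca : caRho (x ∘ φ) ≤ 2 * ω + ε := by
    refine Real.iSup_le ?_ (by linarith)
    rintro ⟨K, hKb, hKc⟩
    refine my_le_of_forall_pos_le_add fun δ hδ => ?_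
    obtain ⟨N, hN⟩ := DP_uniform hDP _ hz hKc (δ / 2) (by linarith)
    have hbb : BddBelow (Set.range fun n : ℕ => sSup {r : ℝ | ∃ i j : ℕ, n ≤ i ∧ n ≤ j ∧
        ∃ f ∈ K, r = |f ((x ∘ φ) i) - f ((x ∘ φ) j)|}) := by
      refine ⟨0, ?_⟩
      rintro r ⟨n, rfl⟩
      refine Real.sSup_nonneg ?_
      rintro r ⟨i, j, _, _, f, _, rfl⟩
      exact abs_nonneg _
    refine le_trans (ciInf_le hbb N) ?_
    refine Real.sSup_le ?_ (by linarith)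
    rintro r ⟨i, j, hi, hj, f, hfK, rfl⟩
    have hf1 : ‖f‖ ≤ 1 := by simpa using mem_closedBall_zero_iff.mp (hKb hfK)
    have hbound : ∀ w : X, |f w| ≤ ‖w‖ := by
      intro w
      calc |f w| = ‖f w‖ := (Real.norm_eq_abs _).symm
        _ ≤ ‖f‖ * ‖w‖ := f.le_opNorm w
        _ ≤ 1 * ‖w‖ := mul_le_mul_of_nonneg_right hf1 (norm_nonneg _)
        _ = ‖w‖ := one_mul _
    have b1 : |f (x (φ i) - kk (φ i))| ≤ ω + ε / 4 := by
      refine le_trans (hbound _) ?_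
      rw [← dist_eq_norm]
      exact (hkd (φ i)).le
    have b4 : |f (x (φ j) - kk (φ j))| ≤ ω + ε / 4 := by
      refine le_trans (hbound _) ?_
      rw [← dist_eq_norm]
      exact (hkd (φ j)).le
    have b2 : |f (kk (φ i) - u)| ≤ δ / 2 := hN i hi f hfK
    have b3 : |f (kk (φ j) - u)| ≤ δ / 2 := hN j hj f hfK
    have hsplit : f ((x ∘ φ) i) - f ((x ∘ φ) j)
        = f (x (φ i) - kk (φ i)) + f (kk (φ i) - u)
          - f (kk (φ j) - u) - f (x (φ j) - kk (φ j)) := by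
      simp only [Function.comp_apply, map_sub]
      ring
    rw [hsplit]
    have l1 := le_abs_self (f (x (φ i) - kk (φ i)))
    have l1' := neg_abs_le (f (x (φ i) - kk (φ i)))
    have l2 := le_abs_self (f (kk (φ i) - u))
    have l2' := neg_abs_le (f (kk (φ i) - u))
    have l3 := le_abs_self (f (kk (φ j) - u))
    have l3' := neg_abs_le (f (kk (φ j) - u))
    have l4 := le_abs_self (f (x (φ j) - kk (φ j)))
    have l4' := neg_abs_le (f (x (φ j) - kk (φ j)))
    refine abs_le.mpr ⟨by linarith, by linarith⟩
  have hwle : wcaRho x ≤ caRho (x ∘ φ) := by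
    have hb : BddBelow (Set.range fun ψ : {ψ : ℕ → ℕ // StrictMono ψ} => caRho (x ∘ ψ.1)) := by
      refine ⟨0, ?_⟩
      rintro r ⟨ψ, rfl⟩
      exact caRho_nonneg _
    exact ciInf_le hb ⟨φ, hφ⟩
  linarith

end
end

section
/- Let X be a Banach space and C > 0 such that limsup_n |x*_n(x_n)| ≤ C·wk_{X*}({x*_n : n ∈ ℕ}) whenever (x_n) is a weakly null sequence in the closed unit ball B_X and (x*_n) is a bounded sequence in X*. Then ca_{ρ*}(x*_n) ≤ (2C+1)·δ(x*_n) for every bounded sequence (x*_n) in X*. -/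
open Metric NormedSpace Filter Topology Set

noncomputable section

section Statement7Aux

variable {X : Type*} [NormedAddCommGroup X] [NormedSpace ℝ X]

lemma delta_nonneg (f : ℕ → StrongDual ℝ X) : 0 ≤ deltaSeq f := by
  refine Real.iSup_nonneg fun F => Real.iInf_nonneg fun n => Real.sSup_nonneg ?_
  rintro r ⟨i, j, _, _, rfl⟩
  exact abs_nonneg _

lemma S_bddAbove (f : ℕ → StrongDual ℝ X) {M : ℝ} (hM : ∀ n, ‖f n‖ ≤ M)
    (F : StrongDual ℝ (StrongDual ℝ X)) (n : ℕ) :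
    ∀ r ∈ {r : ℝ | ∃ i j : ℕ, n ≤ i ∧ n ≤ j ∧ r = |F (f i) - F (f j)|}, r ≤ ‖F‖ * (2 * M) := by
  rintro r ⟨i, j, _, _, rfl⟩
  have h1 : |F (f i)| ≤ ‖F‖ * M := by
    calc |F (f i)| = ‖F (f i)‖ := (Real.norm_eq_abs _).symm
    _ ≤ ‖F‖ * ‖f i‖ := F.le_opNorm _
    _ ≤ ‖F‖ * M := by
      exact mul_le_mul_of_nonneg_left (hM i) (norm_nonneg F)
  have h2 : |F (f j)| ≤ ‖F‖ * M := by
    calc |F (f j)| = ‖F (f j)‖ := (Real.norm_eq_abs _).symm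
    _ ≤ ‖F‖ * ‖f j‖ := F.le_opNorm _
    _ ≤ ‖F‖ * M := by
      exact mul_le_mul_of_nonneg_left (hM j) (norm_nonneg F)
  calc |F (f i) - F (f j)| ≤ |F (f i)| + |F (f j)| := abs_sub _ _
  _ ≤ ‖F‖ * M + ‖F‖ * M := add_le_add h1 h2
  _ = ‖F‖ * (2 * M) := by ring

lemma S_zero_mem (f : ℕ → StrongDual ℝ X) (F : StrongDual ℝ (StrongDual ℝ X)) (n : ℕ) :
    (0 : ℝ) ∈ {r : ℝ | ∃ i j : ℕ, n ≤ i ∧ n ≤ j ∧ r = |F (f i) - F (f j)|} :=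
  ⟨n, n, le_rfl, le_rfl, by simp⟩

lemma sSup_S_nonneg (f : ℕ → StrongDual ℝ X) {M : ℝ} (hM : ∀ n, ‖f n‖ ≤ M)
    (F : StrongDual ℝ (StrongDual ℝ X)) (n : ℕ) :
    0 ≤ sSup {r : ℝ | ∃ i j : ℕ, n ≤ i ∧ n ≤ j ∧ r = |F (f i) - F (f j)|} :=
  le_csSup ⟨‖F‖ * (2 * M), S_bddAbove f hM F n⟩ (S_zero_mem f F n)

lemma delta_aux (f : ℕ → StrongDual ℝ X) {M : ℝ} (hM : ∀ n, ‖f n‖ ≤ M) (hM0 : 0 ≤ M)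
    (F : StrongDual ℝ (StrongDual ℝ X)) (hF : ‖F‖ ≤ 1) {ε : ℝ} (hε : 0 < ε) :
    ∃ n₀ : ℕ, ∀ i j : ℕ, n₀ ≤ i → n₀ ≤ j →
      |F (f i) - F (f j)| < deltaSeq f + ε := by
  have hFmem : F ∈ closedBall (0 : StrongDual ℝ (StrongDual ℝ X)) 1 := by
    exact (mem_closedBall_zero_iff (E := StrongDual ℝ (StrongDual ℝ X))).mpr hF
  have hbddrange : BddAbove (Set.range fun G : (closedBall (0 : StrongDual ℝ (StrongDual ℝ X)) 1) =>
      ⨅ n : ℕ, sSup {r : ℝ | ∃ i j : ℕ, n ≤ i ∧ n ≤ j ∧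
        r = |(G : StrongDual ℝ (StrongDual ℝ X)) (f i) - (G : StrongDual ℝ (StrongDual ℝ X)) (f j)|}) := by
    refine ⟨2 * M, ?_⟩
    rintro _ ⟨G, rfl⟩
    have hG1 : ‖(G : StrongDual ℝ (StrongDual ℝ X))‖ ≤ 1 := by
      exact (mem_closedBall_zero_iff (E := StrongDual ℝ (StrongDual ℝ X))).mp G.2
    have hbb : BddBelow (Set.range fun n : ℕ => sSup {r : ℝ | ∃ i j : ℕ, n ≤ i ∧ n ≤ j ∧
        r = |(G : StrongDual ℝ (StrongDual ℝ X)) (f i) - (G : StrongDual ℝ (StrongDual ℝ X)) (f j)|}) := by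
      refine ⟨0, ?_⟩
      rintro _ ⟨n, rfl⟩
      exact sSup_S_nonneg f hM _ n
    refine (ciInf_le hbb 0).trans ?_
    refine Real.sSup_le ?_ (by linarith)
    intro r hr
    refine (S_bddAbove f hM _ 0 r hr).trans ?_
    have h2M : (0:ℝ) ≤ 2 * M := by linarith
    calc ‖(G : StrongDual ℝ (StrongDual ℝ X))‖ * (2 * M) ≤ 1 * (2 * M) :=
      mul_le_mul_of_nonneg_right hG1 h2M
    _ = 2 * M := one_mul _
  have hle : (⨅ n : ℕ, sSup {r : ℝ | ∃ i j : ℕ, n ≤ i ∧ n ≤ j ∧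
      r = |F (f i) - F (f j)|}) ≤ deltaSeq f :=
    le_ciSup hbddrange (⟨F, hFmem⟩ : (closedBall (0 : StrongDual ℝ (StrongDual ℝ X)) 1))
  have hlt : (⨅ n : ℕ, sSup {r : ℝ | ∃ i j : ℕ, n ≤ i ∧ n ≤ j ∧
      r = |F (f i) - F (f j)|}) < deltaSeq f + ε :=
    lt_of_le_of_lt hle (lt_add_of_pos_right _ hε)
  obtain ⟨n₀, hn₀⟩ := exists_lt_of_ciInf_lt hlt
  refine ⟨n₀, fun i j hi hj => ?_⟩
  refine lt_of_le_of_lt ?_ hn₀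
  exact le_csSup ⟨‖F‖ * (2 * M), S_bddAbove f hM F n₀⟩ ⟨i, j, hi, hj, rfl⟩

lemma wk_le_delta (f g : ℕ → StrongDual ℝ X) {M : ℝ} (hM : ∀ n, ‖f n‖ ≤ M) (hM0 : 0 ≤ M)
    (hg : ∀ k : ℕ, ∃ i j : ℕ, k ≤ i ∧ k ≤ j ∧ g k = f i - f j) :
    wkMeasure (Set.range g) ≤ deltaSeq f := by
  set ι' := inclusionInDoubleDual ℝ (StrongDual ℝ X) with hι'
  unfold wkMeasure dhat
  refine Real.iSup_le ?_ (delta_nonneg f)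
  rintro ⟨z, hz⟩
  by_cases hcase : ∃ k, z = ι' (g k)
  · obtain ⟨k, rfl⟩ := hcase
    refine le_trans (infDist_le_dist_of_mem ⟨g k, rfl⟩) ?_
    simp only [dist_self]
    exact (dist_self _).le.trans (delta_nonneg f)
  · have hzclos : (StrongDual.toWeakDual z) ∈
        closure (StrongDual.toWeakDual '' (ι' '' Set.range g)) := hz
    have hclos : ∀ n : ℕ, (StrongDual.toWeakDual z) ∈
        closure ((fun k => StrongDual.toWeakDual (ι' (g k))) '' Set.Ici n) := by
      intro n
      set T : ℕ → WeakDual ℝ (StrongDual ℝ (StrongDual ℝ X)) := fun k => StrongDual.toWeakDual (ι' (g k)) with hT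
      have himg : StrongDual.toWeakDual '' (ι' '' Set.range g) = T '' (Set.Iio n ∪ Set.Ici n) := by
        rw [Set.Iio_union_Ici, Set.image_univ]
        rw [← Set.range_comp, ← Set.range_comp]
        rfl
      rw [himg, Set.image_union, closure_union] at hzclos
      rcases hzclos with hmem | hmem
      · have hcl : IsClosed (T '' Set.Iio n) := ((Set.finite_Iio n).image T).isClosed
        rw [hcl.closure_eq] at hmem
        obtain ⟨k, _, hk⟩ := hmem
        exfalso
        apply hcase
        refine ⟨k, ?_⟩
        have : StrongDual.toWeakDual (ι' (g k)) = StrongDual.toWeakDual z := hk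
        have := (StrongDual.toWeakDual (E := StrongDual ℝ (StrongDual ℝ X))).injective this
        exact this.symm
      · exact hmem
    have hunit : ∀ G : StrongDual ℝ (StrongDual ℝ X), ‖G‖ ≤ 1 → |z G| ≤ deltaSeq f := by
      intro G hG
      refine le_of_forall_pos_le_add ?_
      intro ε hε
      obtain ⟨n₀, hn₀⟩ := delta_aux f hM hM0 G hG hε
      have hcont : Continuous (fun u : WeakDual ℝ (StrongDual ℝ (StrongDual ℝ X)) => u G) :=
        WeakDual.eval_continuous G
      have hmapsto : Set.MapsTo (fun u : WeakDual ℝ (StrongDual ℝ (StrongDual ℝ X)) => u G)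
          ((fun k => StrongDual.toWeakDual (ι' (g k))) '' Set.Ici n₀)
          {r : ℝ | |r| ≤ deltaSeq f + ε} := by
        rintro _ ⟨k, hk, rfl⟩
        obtain ⟨i, j, hi, hj, hgk⟩ := hg k
        show |(ι' (g k)) G| ≤ deltaSeq f + ε
        have heval : (ι' (g k)) G = G (f i) - G (f j) := by
          rw [hgk, hι']
          simp
        rw [heval]
        exact (hn₀ i j (le_trans hk hi) (le_trans hk hj)).le
      have hclosed : IsClosed {r : ℝ | |r| ≤ deltaSeq f + ε} :=
        isClosed_le continuous_abs continuous_const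
      have := map_mem_closure hcont (hclos n₀) hmapsto
      rw [hclosed.closure_eq] at this
      exact this
    have hnorm : ‖z‖ ≤ deltaSeq f := by
      refine z.opNorm_le_bound (delta_nonneg f) ?_
      intro G
      by_cases hG0 : G = 0
      · simp [hG0]
      · have hGn : 0 < ‖G‖ := norm_pos_iff.mpr hG0
        have h1 : ‖‖G‖⁻¹ • G‖ ≤ 1 := by
          rw [norm_smul, norm_inv, norm_norm]
          rw [inv_mul_cancel₀ (ne_of_gt hGn)]
        have h2 := hunit (‖G‖⁻¹ • G) h1
        rw [map_smul, smul_eq_mul, abs_mul, abs_inv, abs_norm] at h2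
        rw [Real.norm_eq_abs]
        have h4 := mul_le_mul_of_nonneg_left h2 hGn.le
        rw [← mul_assoc, mul_inv_cancel₀ hGn.ne', one_mul] at h4
        rw [mul_comm (deltaSeq f) ‖G‖]
        exact h4
    refine le_trans (infDist_le_dist_of_mem ⟨0, map_zero ι'⟩) ?_
    rw [dist_eq_norm, sub_zero]
    exact hnorm

lemma weak_seq_cluster {K : Set X} (hK1 : K ⊆ closedBall 0 1) (hK2 : IsWeaklyCompact K)
    (v : ℕ → X) (hv : ∀ n, v n ∈ K) :
    ∃ φ : ℕ → ℕ, StrictMono φ ∧ ∃ w : X, ‖w‖ ≤ 1 ∧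
      ∀ ψ : StrongDual ℝ X, Tendsto (fun k => ψ (v (φ k))) atTop (𝓝 (ψ w)) := by
  classical
  set e := toWeakSpace ℝ X with he
  set sp := Submodule.span ℝ (Set.range v) with hsp
  set Y := closure (sp : Set X) with hY
  have hsep : TopologicalSpace.IsSeparable Y :=
    ((Set.countable_range v).isSeparable.span).closure
  obtain ⟨c, hc, hYc⟩ := hsep
  obtain ⟨u, hu⟩ := Set.Countable.exists_eq_range (hc.insert 0) (Set.insert_nonempty _ _)
  have hYu : Y ⊆ closure (Set.range u) := by
    refine hYc.trans (closure_mono ?_)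
    rw [← hu]
    exact Set.subset_insert _ _
  choose ψ hψ1 hψ2' using fun m => exists_dual_vector'' ℝ (u m)
  have hψ2 : ∀ m, ψ m (u m) = ‖u m‖ := fun m => by exact_mod_cast hψ2' m
  have hsepa : ∀ a b : X, a ∈ Y → b ∈ Y → (∀ m, ψ m a = ψ m b) → a = b := by
    intro a b ha hb hab
    by_contra hne
    have hd : a - b ∈ sp.topologicalClosure := by
      rw [hY, ← Submodule.topologicalClosure_coe] at ha hb
      exact sub_mem ha hb
    have hd0 : a - b ≠ 0 := sub_ne_zero.mpr hne
    have hdn : 0 < ‖a - b‖ := norm_pos_iff.mpr hd0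
    have hmemY : a - b ∈ closure (Set.range u) := by
      apply hYu
      show a - b ∈ closure (sp : Set X)
      rw [← Submodule.topologicalClosure_coe]
      exact hd
    obtain ⟨p, hpmem, hpd⟩ := Metric.mem_closure_iff.mp hmemY (‖a - b‖ / 3) (by positivity)
    obtain ⟨m, rfl⟩ := hpmem
    rw [dist_eq_norm] at hpd
    have h1 : ‖a - b‖ - ‖a - b - u m‖ ≤ ‖u m‖ := by
      have := norm_sub_norm_le (a - b) (u m)
      have h' := norm_sub_le (a - b) (a - b - u m)
      nlinarith [norm_sub_norm_le (a - b) (u m), abs_norm (u m)]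
    have h2 : |ψ m (a - b - u m)| ≤ ‖a - b - u m‖ := by
      calc |ψ m (a - b - u m)| = ‖ψ m (a - b - u m)‖ := (Real.norm_eq_abs _).symm
      _ ≤ ‖ψ m‖ * ‖a - b - u m‖ := (ψ m).le_opNorm _
      _ ≤ 1 * ‖a - b - u m‖ := mul_le_mul_of_nonneg_right (hψ1 m) (norm_nonneg _)
      _ = ‖a - b - u m‖ := one_mul _
    have h3 : ψ m (a - b) = 0 := by
      rw [map_sub, hab m, sub_self]
    have h4 : ψ m (a - b) = ‖u m‖ + ψ m (a - b - u m) := by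
      rw [map_sub (ψ m) (a - b) (u m), hψ2 m]
      ring
    have h5 := abs_le.mp h2
    linarith [h5.1]
  let Φ : WeakSpace ℝ X → ℕ → ℝ := fun z m => ψ m (e.symm z)
  have hΦc : Continuous Φ := by
    refine continuous_pi fun m => ?_
    exact WeakBilin.eval_continuous ((topDualPairing ℝ X).flip) (ψ m)
  set L' : Set (WeakSpace ℝ X) := (⇑e '' K) ∩ closure (⇑e '' Set.range v) with hL'
  have hK2' : IsCompact (⇑e '' K) := hK2
  have hL'c : IsCompact L' := hK2'.inter_right isClosed_closure
  have hclosureeq : closure (⇑e '' (sp : Set X)) = ⇑e '' Y := by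
    rw [hY]
    exact (sp.convex.toWeakSpace_closure ℝ).symm
  have hL'Y : L' ⊆ ⇑e '' Y := by
    intro z hz
    have h1 : z ∈ closure (⇑e '' (sp : Set X)) :=
      closure_mono (Set.image_mono Submodule.subset_span) hz.2
    rwa [hclosureeq] at h1
  have hΦe : ∀ a : X, ∀ m, Φ (e a) m = ψ m a := by
    intro a m
    show ψ m (e.symm (e a)) = ψ m a
    rw [LinearEquiv.symm_apply_apply]
  have hinj : ∀ z ∈ L', ∀ z' ∈ L', Φ z = Φ z' → z = z' := by
    intro z hz z' hz' hΦzz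
    obtain ⟨a, ha, rfl⟩ := hL'Y hz
    obtain ⟨b, hb, rfl⟩ := hL'Y hz'
    have hab : a = b := by
      refine hsepa a b ha hb fun m => ?_
      have := congrFun hΦzz m
      rwa [hΦe a m, hΦe b m] at this
    rw [hab]
  have hPc : IsCompact (Φ '' L') := hL'c.image hΦc
  have hmemL' : ∀ n, e (v n) ∈ L' := fun n =>
    ⟨Set.mem_image_of_mem _ (hv n), subset_closure (Set.mem_image_of_mem _ ⟨n, rfl⟩)⟩
  have hqmem : ∀ n, Φ (e (v n)) ∈ Φ '' L' := fun n => Set.mem_image_of_mem Φ (hmemL' n)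
  obtain ⟨p, hp, φ, hφ, hconv⟩ := hPc.isSeqCompact hqmem
  obtain ⟨zw, hzwL', hΦzw⟩ := hp
  haveI : CompactSpace ↥L' := isCompact_iff_compactSpace.mp hL'c
  let Fb : ↥L' → ↥(Φ '' L') := fun z => ⟨Φ z.1, Set.mem_image_of_mem Φ z.2⟩
  have hFbbij : Function.Bijective Fb := by
    constructor
    · intro z z' hzz
      exact Subtype.ext (hinj _ z.2 _ z'.2 (congrArg Subtype.val hzz))
    · rintro ⟨_, zz, hzz, rfl⟩
      exact ⟨⟨zz, hzz⟩, rfl⟩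
  let Feq : ↥L' ≃ ↥(Φ '' L') := Equiv.ofBijective Fb hFbbij
  have hFc : Continuous ⇑Feq := Continuous.subtype_mk (hΦc.comp continuous_subtype_val) _
  let homeo : ↥L' ≃ₜ ↥(Φ '' L') := hFc.homeoOfEquivCompactToT2
  let ut : ℕ → ↥L' := fun k => ⟨e (v (φ k)), hmemL' (φ k)⟩
  have hph : p ∈ Φ '' L' := ⟨zw, hzwL', hΦzw⟩
  have h1 : Tendsto (fun k => homeo (ut k)) atTop (𝓝 (⟨p, hph⟩ : ↥(Φ '' L'))) := by
    rw [tendsto_subtype_rng]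
    exact hconv
  have hhz : homeo (⟨zw, hzwL'⟩ : ↥L') = (⟨p, hph⟩ : ↥(Φ '' L')) := Subtype.ext hΦzw
  have h2 : Tendsto ut atTop (𝓝 (⟨zw, hzwL'⟩ : ↥L')) := by
    have h3 : Tendsto (fun k => homeo.symm (homeo (ut k))) atTop
        (𝓝 (homeo.symm (⟨p, hph⟩ : ↥(Φ '' L')))) :=
      (homeo.symm.continuous.tendsto _).comp h1
    simp only [Homeomorph.symm_apply_apply] at h3
    rwa [← hhz, Homeomorph.symm_apply_apply] at h3
  have h4 : Tendsto (fun k => e (v (φ k))) atTop (𝓝 zw) := by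
    have := (continuous_subtype_val.tendsto _).comp h2
    exact this
  obtain ⟨xK, hxK, hxKe⟩ := hzwL'.1
  refine ⟨φ, hφ, xK, ?_, ?_⟩
  · have := hK1 hxK
    rwa [mem_closedBall, dist_zero_right] at this
  · intro ψ'
    have hcont : Continuous fun z : WeakSpace ℝ X => ψ' (e.symm z) :=
      WeakBilin.eval_continuous ((topDualPairing ℝ X).flip) ψ'
    have h5 := (hcont.tendsto zw).comp h4
    have h6 : ∀ k, ψ' (e.symm (e (v (φ k)))) = ψ' (v (φ k)) := by
      intro k; rw [LinearEquiv.symm_apply_apply]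
    have h7 : ψ' (e.symm zw) = ψ' xK := by rw [← hxKe, LinearEquiv.symm_apply_apply]
    simp only [Function.comp_def, h6, h7] at h5
    exact h5

end Statement7Aux

/-- If `limsup |x*_n(x_n)| ≤ C·wk_{X*}({x*_n})` for every weakly null `(x_n)` in
`B_X` and bounded `(x*_n)` in `X*`, then `ca_{ρ*}(x*_n) ≤ (2C+1)·δ(x*_n)` for every bounded
sequence `(x*_n)` in `X*`. -/
theorem statement7 {X : Type*} [NormedAddCommGroup X] [NormedSpace ℝ X] [CompleteSpace X]
    (C : ℝ) (hC : 0 < C)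
    (h : ∀ (x : ℕ → X) (f : ℕ → StrongDual ℝ X), (∀ n, ‖x n‖ ≤ 1) → WeaklyNull x →
      (∃ M : ℝ, ∀ n, ‖f n‖ ≤ M) →
      Filter.limsup (fun n => |f n (x n)|) atTop ≤ C * wkMeasure (Set.range f))
    (f : ℕ → StrongDual ℝ X) (hf : ∃ M : ℝ, ∀ n, ‖f n‖ ≤ M) :
    caRhoStar f ≤ (2 * C + 1) * deltaSeq f := by
  classical
  obtain ⟨M, hM⟩ := hf
  have hM0 : 0 ≤ M := le_trans (norm_nonneg _) (hM 0)
  have hδ0 : 0 ≤ deltaSeq f := delta_nonneg f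
  have hRHS0 : 0 ≤ (2 * C + 1) * deltaSeq f := mul_nonneg (by linarith) hδ0
  unfold caRhoStar
  refine Real.iSup_le ?_ hRHS0
  rintro ⟨K, hK1, hK2⟩
  show (⨅ n : ℕ, sSup {r : ℝ | ∃ i j : ℕ, n ≤ i ∧ n ≤ j ∧
      ∃ v ∈ K, r = |f i v - f j v|}) ≤ (2 * C + 1) * deltaSeq f
  by_cases hKne : K.Nonempty
  swap
  · have hemp : ∀ n : ℕ, {r : ℝ | ∃ i j : ℕ, n ≤ i ∧ n ≤ j ∧
        ∃ v ∈ K, r = |f i v - f j v|} = (∅ : Set ℝ) := by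
      intro n
      rw [Set.eq_empty_iff_forall_notMem]
      rintro r ⟨i, j, _, _, vv, hvv, _⟩
      exact hKne ⟨vv, hvv⟩
    simp only [hemp, Real.sSup_empty, ciInf_const]
    exact hRHS0
  obtain ⟨v₀, hv₀⟩ := hKne
  set S : ℕ → Set ℝ := fun n => {r : ℝ | ∃ i j : ℕ, n ≤ i ∧ n ≤ j ∧
      ∃ v ∈ K, r = |f i v - f j v|} with hS
  have hSbdd : ∀ n, BddAbove (S n) := by
    intro n
    refine ⟨2 * M, ?_⟩
    rintro r ⟨i, j, _, _, vv, hvv, rfl⟩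
    have hv1 : ‖vv‖ ≤ 1 := by
      have := hK1 hvv
      rwa [mem_closedBall, dist_zero_right] at this
    have hfi : |f i vv| ≤ M := by
      calc |f i vv| = ‖f i vv‖ := (Real.norm_eq_abs _).symm
      _ ≤ ‖f i‖ * ‖vv‖ := (f i).le_opNorm _
      _ ≤ M * 1 := mul_le_mul (hM i) hv1 (norm_nonneg _) hM0
      _ = M := mul_one _
    have hfj : |f j vv| ≤ M := by
      calc |f j vv| = ‖f j vv‖ := (Real.norm_eq_abs _).symm
      _ ≤ ‖f j‖ * ‖vv‖ := (f j).le_opNorm _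
      _ ≤ M * 1 := mul_le_mul (hM j) hv1 (norm_nonneg _) hM0
      _ = M := mul_one _
    calc |f i vv - f j vv| ≤ |f i vv| + |f j vv| := abs_sub _ _
    _ ≤ 2 * M := by linarith
  have hS0 : ∀ n, (0 : ℝ) ∈ S n := fun n => ⟨n, n, le_rfl, le_rfl, v₀, hv₀, by simp⟩
  have hSnn : ∀ n, 0 ≤ sSup (S n) := fun n => le_csSup (hSbdd n) (hS0 n)
  have hbb : BddBelow (Set.range fun n => sSup (S n)) := by
    refine ⟨0, ?_⟩
    rintro _ ⟨n, rfl⟩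
    exact hSnn n
  refine le_of_forall_pos_le_add ?_
  intro ε hε
  have hε' : 0 < ε / 2 := by positivity
  have hwit : ∀ n : ℕ, ∃ i j : ℕ, n ≤ i ∧ n ≤ j ∧ ∃ vv ∈ K,
      (⨅ m : ℕ, sSup (S m)) - ε / 2 < |f i vv - f j vv| := by
    intro n
    have h1 : (⨅ m : ℕ, sSup (S m)) - ε / 2 < sSup (S n) :=
      lt_of_lt_of_le (sub_lt_self _ hε') (ciInf_le hbb n)
    obtain ⟨r, hrS, hrlt⟩ := exists_lt_of_lt_csSup ⟨0, hS0 n⟩ h1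
    obtain ⟨i, j, hi, hj, vv, hvv, rfl⟩ := hrS
    exact ⟨i, j, hi, hj, vv, hvv, hrlt⟩
  choose iw jw hiw hjw vw hvwK hvwlt using hwit
  obtain ⟨φ, hφ, w, hw1, hw2⟩ := weak_seq_cluster hK1 hK2 vw hvwK
  set x : ℕ → X := fun k => (2 : ℝ)⁻¹ • (vw (φ k) - w) with hx
  have hx1 : ∀ k, ‖x k‖ ≤ 1 := by
    intro k
    have hv1 : ‖vw (φ k)‖ ≤ 1 := by
      have := hK1 (hvwK (φ k))
      rwa [mem_closedBall, dist_zero_right] at this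
    have hsub : ‖vw (φ k) - w‖ ≤ 2 := by
      calc ‖vw (φ k) - w‖ ≤ ‖vw (φ k)‖ + ‖w‖ := norm_sub_le _ _
      _ ≤ 2 := by linarith
    calc ‖x k‖ = ‖(2 : ℝ)⁻¹‖ * ‖vw (φ k) - w‖ := norm_smul _ _
    _ ≤ ‖(2 : ℝ)⁻¹‖ * 2 := by
      refine mul_le_mul_of_nonneg_left hsub (norm_nonneg _)
    _ = 1 := by
      rw [Real.norm_eq_abs, abs_of_pos (by norm_num : (0:ℝ) < 2⁻¹)]
      norm_num
  have hxnull : WeaklyNull x := by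
    intro ψ'
    have h1 : Tendsto (fun k => ψ' (vw (φ k)) - ψ' w) atTop (𝓝 0) := by
      have := (hw2 ψ').sub_const (ψ' w)
      simpa using this
    have h2 := h1.const_mul ((2 : ℝ)⁻¹)
    rw [mul_zero] at h2
    have h3 : ∀ k, (2 : ℝ)⁻¹ * (ψ' (vw (φ k)) - ψ' w) = ψ' (x k) := by
      intro k
      rw [hx]
      simp only [map_smul, map_sub, smul_eq_mul]
    simpa only [h3] using h2
  set g : ℕ → StrongDual ℝ X := fun k => f (iw (φ k)) - f (jw (φ k)) with hg
  have hgM : ∀ k, ‖g k‖ ≤ 2 * M := by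
    intro k
    calc ‖g k‖ ≤ ‖f (iw (φ k))‖ + ‖f (jw (φ k))‖ := norm_sub_le _ _
    _ ≤ 2 * M := by linarith [hM (iw (φ k)), hM (jw (φ k))]
  have hgdiff : ∀ k : ℕ, ∃ i j : ℕ, k ≤ i ∧ k ≤ j ∧ g k = f i - f j := fun k =>
    ⟨iw (φ k), jw (φ k), le_trans hφ.le_apply (hiw (φ k)),
      le_trans hφ.le_apply (hjw (φ k)), rfl⟩
  have hwk : wkMeasure (Set.range g) ≤ deltaSeq f := wk_le_delta f g hM hM0 hgdiff
  have hlimsup := h x g hx1 hxnull ⟨2 * M, hgM⟩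
  have hFw : ‖inclusionInDoubleDual ℝ X w‖ ≤ 1 := le_trans (double_dual_bound ℝ X w) hw1
  obtain ⟨n₀, hn₀⟩ := delta_aux f hM hM0 (inclusionInDoubleDual ℝ X w) hFw hε'
  have hgw : ∀ k, n₀ ≤ k → |g k w| < deltaSeq f + ε / 2 := by
    intro k hk
    have h1 := hn₀ (iw (φ k)) (jw (φ k))
      (le_trans hk (le_trans hφ.le_apply (hiw (φ k))))
      (le_trans hk (le_trans hφ.le_apply (hjw (φ k))))
    simpa [hg] using h1
  set c : ℝ := ⨅ m : ℕ, sSup (S m) with hc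
  have hlower : ∀ k, n₀ ≤ k → (c - deltaSeq f - ε) / 2 ≤ |g k (x k)| := by
    intro k hk
    have h1 : c - ε / 2 < |g k (vw (φ k))| := by
      have := hvwlt (φ k)
      simpa [hg] using this
    have h2 : |g k w| < deltaSeq f + ε / 2 := hgw k hk
    have h3 : g k (x k) = (2 : ℝ)⁻¹ * (g k (vw (φ k)) - g k w) := by
      rw [hx]
      simp only [map_smul, map_sub, smul_eq_mul]
    have h4 : |g k (vw (φ k))| - |g k w| ≤ |g k (vw (φ k)) - g k w| :=
      abs_sub_abs_le_abs_sub _ _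
    rw [h3, abs_mul]
    have h5 : |(2 : ℝ)⁻¹| = 2⁻¹ := by norm_num
    rw [h5]
    linarith
  have hbound : Filter.IsBoundedUnder (· ≤ ·) atTop (fun k => |g k (x k)|) := by
    refine isBoundedUnder_of ⟨2 * M, fun k => ?_⟩
    calc |g k (x k)| = ‖g k (x k)‖ := (Real.norm_eq_abs _).symm
    _ ≤ ‖g k‖ * ‖x k‖ := (g k).le_opNorm _
    _ ≤ (2 * M) * 1 := mul_le_mul (hgM k) (hx1 k) (norm_nonneg _) (by linarith)
    _ = 2 * M := mul_one _
  have hfreq : ∃ᶠ k in atTop, (c - deltaSeq f - ε) / 2 ≤ |g k (x k)| :=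
    ((eventually_ge_atTop n₀).mono fun k hk => hlower k hk).frequently
  have hll := Filter.le_limsup_of_frequently_le hfreq hbound
  have hCwk : C * wkMeasure (Set.range g) ≤ C * deltaSeq f :=
    mul_le_mul_of_nonneg_left hwk hC.le
  have hchain : (c - deltaSeq f - ε) / 2 ≤ C * deltaSeq f :=
    le_trans hll (le_trans hlimsup hCwk)
  linarith


end
end
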